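/- arXiv:2305.16102 — 4 statements merged into one kernel-verified Lean document; each statement's English description precedes it below -/
import Mathlib

section
/- Consider the attention-based GNN dynamics in which σ is the identity map, i.e., X^(t+1) = P^(t)X^(t)W^(t). Under assumptions (A1), (A2) and (A3), there exist q ∈ (0,1) and C₁ > 0 such that μ(X^(t)) ≤ C₁·qᵗ for all t ≥ 0; consequently, all node representations (rows of X^(t)) exponentially converge to a common vector as t → ∞. -/
open Matrix Filter

noncomputable section

/-- Frobenius norm of a real matrix. -/
def frobNorm {N d : ℕ} (X : Matrix (Fin N) (Fin d) ℝ) : ℝ :=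
  Real.sqrt (∑ i, ∑ j, (X i j) ^ 2)

/-- μ(X) = ‖X − 1γ_X‖_F where γ_X = (1/N)1ᵀX. -/
def gnnMu {N d : ℕ} (X : Matrix (Fin N) (Fin d) ℝ) : ℝ :=
  frobNorm (X - Matrix.of fun _i j => (∑ k, X k j) / N)

/-- Row-stochastic matrix. -/
def rowStochastic {N : ℕ} (P : Matrix (Fin N) (Fin N) ℝ) : Prop :=
  (∀ i j, 0 ≤ P i j) ∧ ∀ i, ∑ j, P i j = 1

/-- The set 𝒫_{G,ε}. -/
def Pset {N : ℕ} (G : SimpleGraph (Fin N)) (ε : ℝ) : Set (Matrix (Fin N) (Fin N) ℝ) :=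
  {P | rowStochastic P ∧ (∀ i j, G.Adj i j → ε ≤ P i j ∧ P i j ≤ 1) ∧
    ∀ i j, ¬ G.Adj i j → P i j = 0}

/-- The set 𝒟 of diagonal matrices with diagonal entries in [0,1]. -/
def Dset (N : ℕ) : Set (Matrix (Fin N) (Fin N) ℝ) :=
  {D | D.IsDiag ∧ ∀ i, 0 ≤ D i i ∧ D i i ≤ 1}

/-- The set 𝒟_δ of diagonal matrices with diagonal entries in [0,δ]. -/
def DsetB (N : ℕ) (δ : ℝ) : Set (Matrix (Fin N) (Fin N) ℝ) :=
  {D | D.IsDiag ∧ ∀ i, 0 ≤ D i i ∧ D i i ≤ δ}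

/-- The set ℳ_{G,ε} = {DP : D ∈ 𝒟, P ∈ 𝒫_{G,ε}}. -/
def Mset {N : ℕ} (G : SimpleGraph (Fin N)) (ε : ℝ) : Set (Matrix (Fin N) (Fin N) ℝ) :=
  {M | ∃ D ∈ Dset N, ∃ P ∈ Pset G ε, M = D * P}

/-- The set ℳ_{G,ε,δ} = {DP : D ∈ 𝒟_δ, P ∈ 𝒫_{G,ε}}. -/
def MsetB {N : ℕ} (G : SimpleGraph (Fin N)) (ε δ : ℝ) : Set (Matrix (Fin N) (Fin N) ℝ) :=
  {M | ∃ D ∈ DsetB N δ, ∃ P ∈ Pset G ε, M = D * P}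

/-- Backward product P^(t) P^(t-1) ⋯ P^(0). -/
def bprod {N : ℕ} (P : ℕ → Matrix (Fin N) (Fin N) ℝ) : ℕ → Matrix (Fin N) (Fin N) ℝ
  | 0 => P 0
  | t + 1 => P (t + 1) * bprod P t

/-- The orthogonal projection J = I − (1/N)11ᵀ onto the complement of span{1}. -/
def projJ (N : ℕ) : Matrix (Fin N) (Fin N) ℝ :=
  1 - (N : ℝ)⁻¹ • Matrix.of fun _ _ => (1 : ℝ)

/-- Matrix ∞-norm: maximum absolute row sum. -/
def infNorm {N : ℕ} (M : Matrix (Fin N) (Fin N) ℝ) : ℝ :=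
  ⨆ i, ∑ j, |M i j|

/-- Forward product of entrywise absolute values |W^(0)||W^(1)|⋯|W^(k)|. -/
def Wabs {d : ℕ} (W : ℕ → Matrix (Fin d) (Fin d) ℝ) : ℕ → Matrix (Fin d) (Fin d) ℝ
  | 0 => (W 0).map (fun x => |x|)
  | k + 1 => Wabs W k * (W (k + 1)).map (fun x => |x|)

/-- Q̂_{t₀, t₀+k} = P^{t₀+k} D^{t₀+k-1} P^{t₀+k-1} ⋯ D^{t₀} P^{t₀}. -/
def Qhat {N : ℕ} (D P : ℕ → Matrix (Fin N) (Fin N) ℝ) (t₀ : ℕ) :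
    ℕ → Matrix (Fin N) (Fin N) ℝ
  | 0 => P t₀
  | k + 1 => P (t₀ + k + 1) * D (t₀ + k) * Qhat D P t₀ k

/-- Q_{0,k} = D^(k) P^(k) ⋯ D^(0) P^(0). -/
def Qprod {N : ℕ} (D P : ℕ → Matrix (Fin N) (Fin N) ℝ) : ℕ → Matrix (Fin N) (Fin N) ℝ
  | 0 => D 0 * P 0
  | k + 1 => D (k + 1) * P (k + 1) * Qprod D P k

/-- P^(m+k) P^(m+k-1) ⋯ P^(m). -/
def PprodFrom {N : ℕ} (P : ℕ → Matrix (Fin N) (Fin N) ℝ) (m : ℕ) :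
    ℕ → Matrix (Fin N) (Fin N) ℝ
  | 0 => P m
  | k + 1 => P (m + k + 1) * PprodFrom P m k

/-- D^(m+k) P^(m+k) ⋯ D^(m) P^(m). -/
def QprodFrom {N : ℕ} (D P : ℕ → Matrix (Fin N) (Fin N) ℝ) (m : ℕ) :
    ℕ → Matrix (Fin N) (Fin N) ℝ
  | 0 => D m * P m
  | k + 1 => D (m + k + 1) * P (m + k + 1) * QprodFrom D P m k

/-- Joint spectral radius of a set of square matrices (w.r.t. the Frobenius norm;
the value is independent of the chosen norm). -/
def JSR {n : ℕ} (A : Set (Matrix (Fin n) (Fin n) ℝ)) : ℝ :=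
  Filter.limsup (fun k : ℕ =>
    sSup {x : ℝ | ∃ M : Fin k → Matrix (Fin n) (Fin n) ℝ,
      (∀ i, M i ∈ A) ∧ x = frobNorm (List.ofFn M).prod ^ (k : ℝ)⁻¹}) Filter.atTop

/-- Spectral radius of a real square matrix: max modulus of its complex eigenvalues. -/
def specRad {n : ℕ} (M : Matrix (Fin n) (Fin n) ℝ) : ℝ :=
  sSup {r : ℝ | ∃ z ∈ spectrum ℂ (M.map Complex.ofReal), r = ‖z‖}

end

namespace Stmt13Aux

/-! ### Oscillation machinery -/

noncomputable def vmax {N : ℕ} [NeZero N] (y : Fin N → ℝ) : ℝ :=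
  Finset.univ.sup' Finset.univ_nonempty y
noncomputable def vmin {N : ℕ} [NeZero N] (y : Fin N → ℝ) : ℝ :=
  Finset.univ.inf' Finset.univ_nonempty y
noncomputable def osc {N : ℕ} [NeZero N] (y : Fin N → ℝ) : ℝ := vmax y - vmin y

section Osc
variable {N : ℕ} [NeZero N]

lemma le_vmax (y : Fin N → ℝ) (i : Fin N) : y i ≤ vmax y :=
  Finset.le_sup' y (Finset.mem_univ i)

lemma vmin_le (y : Fin N → ℝ) (i : Fin N) : vmin y ≤ y i :=
  Finset.inf'_le y (Finset.mem_univ i)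

lemma osc_nonneg (y : Fin N → ℝ) : 0 ≤ osc y := by
  obtain ⟨i⟩ : Nonempty (Fin N) := inferInstance
  have := (vmin_le y i).trans (le_vmax y i)
  simpa [osc] using this

lemma osc_le_of_bound (y : Fin N → ℝ) (M : ℝ) (h : ∀ i, |y i| ≤ M) : osc y ≤ 2 * M := by
  obtain ⟨i⟩ : Nonempty (Fin N) := inferInstance
  have h1 : vmax y ≤ M := by
    apply Finset.sup'_le
    intro i _
    exact (abs_le.mp (h i)).2
  have h2 : -M ≤ vmin y := by
    apply Finset.le_inf'
    intro i _
    exact (abs_le.mp (h i)).1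
  simp only [osc]; linarith

lemma abs_sub_mean_le_osc (y : Fin N → ℝ) (i : Fin N) :
    |y i - (∑ k, y k) / N| ≤ osc y := by
  have hN : (0:ℝ) < N := by
    have := NeZero.pos N; exact_mod_cast this
  have hmean_le : (∑ k, y k) / N ≤ vmax y := by
    rw [div_le_iff₀ hN]
    calc (∑ k, y k) ≤ ∑ _k : Fin N, vmax y := Finset.sum_le_sum fun k _ => le_vmax y k
    _ = vmax y * N := by simp [mul_comm]
  have hmean_ge : vmin y ≤ (∑ k, y k) / N := by
    rw [le_div_iff₀ hN]
    calc vmin y * N = ∑ _k : Fin N, vmin y := by simp [mul_comm]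
    _ ≤ ∑ k, y k := Finset.sum_le_sum fun k _ => vmin_le y k
  rw [abs_sub_le_iff]
  constructor
  · have := le_vmax y i
    simp only [osc]; linarith
  · have := vmin_le y i
    simp only [osc]; linarith

lemma mulVec_bounds {M : Matrix (Fin N) (Fin N) ℝ} (hM : rowStochastic M)
    (η : ℝ) (hpos : ∀ i j, η ≤ M i j) (y : Fin N → ℝ) (i : Fin N) :
    (1 - N * η) * vmin y + η * ∑ k, y k ≤ M.mulVec y i ∧
      M.mulVec y i ≤ (1 - N * η) * vmax y + η * ∑ k, y k := by
  have hsum : ∑ j, (M i j - η) = 1 - N * η := by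
    rw [Finset.sum_sub_distrib, hM.2 i]
    simp [mul_comm]
  have hMv : M.mulVec y i = ∑ j, ((M i j - η) * y j + η * y j) := by
    simp [Matrix.mulVec, dotProduct]
    congr 1; funext j; ring
  constructor
  · rw [hMv, Finset.sum_add_distrib, ← Finset.mul_sum]
    have : (1 - N * η) * vmin y = ∑ j, (M i j - η) * vmin y := by
      rw [← Finset.sum_mul, hsum]
    rw [this]
    exact add_le_add (Finset.sum_le_sum fun j _ =>
      mul_le_mul_of_nonneg_left (vmin_le y j) (sub_nonneg.mpr (hpos i j))) le_rfl
  · rw [hMv, Finset.sum_add_distrib, ← Finset.mul_sum]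
    have : (1 - N * η) * vmax y = ∑ j, (M i j - η) * vmax y := by
      rw [← Finset.sum_mul, hsum]
    rw [this]
    exact add_le_add (Finset.sum_le_sum fun j _ =>
      mul_le_mul_of_nonneg_left (le_vmax y j) (sub_nonneg.mpr (hpos i j))) le_rfl

lemma osc_mulVec_le {M : Matrix (Fin N) (Fin N) ℝ} (hM : rowStochastic M)
    (η : ℝ) (hpos : ∀ i j, η ≤ M i j) (y : Fin N → ℝ) :
    osc (M.mulVec y) ≤ (1 - N * η) * osc y := by
  have hub : vmax (M.mulVec y) ≤ (1 - N * η) * vmax y + η * ∑ k, y k := by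
    apply Finset.sup'_le
    intro i _
    exact (mulVec_bounds hM η hpos y i).2
  have hlb : (1 - N * η) * vmin y + η * ∑ k, y k ≤ vmin (M.mulVec y) := by
    apply Finset.le_inf'
    intro i _
    exact (mulVec_bounds hM η hpos y i).1
  simp only [osc]
  nlinarith [hub, hlb]

lemma osc_mulVec_le' {M : Matrix (Fin N) (Fin N) ℝ} (hM : rowStochastic M)
    (y : Fin N → ℝ) : osc (M.mulVec y) ≤ osc y := by
  have := osc_mulVec_le hM 0 (fun i j => hM.1 i j) y
  simpa using this

lemma one_sub_nonneg {M : Matrix (Fin N) (Fin N) ℝ} (hM : rowStochastic M)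
    (η : ℝ) (hpos : ∀ i j, η ≤ M i j) : 0 ≤ 1 - N * η := by
  obtain ⟨i⟩ : Nonempty (Fin N) := inferInstance
  have h1 : (N : ℝ) * η = ∑ _j : Fin N, η := by simp [mul_comm]
  have h2 : ∑ _j : Fin N, η ≤ ∑ j, M i j := Finset.sum_le_sum fun j _ => hpos i j
  rw [hM.2 i] at h2
  linarith [h1 ▸ h2]

end Osc

/-! ### Backward products of stochastic matrices -/

section Bk
variable {N : ℕ}

noncomputable def Bk (P : ℕ → Matrix (Fin N) (Fin N) ℝ) (s : ℕ) :
    ℕ → Matrix (Fin N) (Fin N) ℝ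
  | 0 => 1
  | k+1 => P (s+k) * Bk P s k

lemma rowStochastic_one : rowStochastic (1 : Matrix (Fin N) (Fin N) ℝ) := by
  constructor
  · intro i j
    by_cases h : i = j <;> simp [Matrix.one_apply, h]
  · intro i
    simp [Matrix.one_apply]

lemma rowStochastic_mul {A B : Matrix (Fin N) (Fin N) ℝ}
    (hA : rowStochastic A) (hB : rowStochastic B) : rowStochastic (A * B) := by
  constructor
  · intro i j
    rw [Matrix.mul_apply]
    exact Finset.sum_nonneg fun l _ => mul_nonneg (hA.1 i l) (hB.1 l j)
  · intro i
    simp only [Matrix.mul_apply]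
    rw [Finset.sum_comm]
    calc ∑ l, ∑ j, A i l * B l j = ∑ l, A i l * ∑ j, B l j := by
          simp [Finset.mul_sum]
      _ = 1 := by simp [hB.2, hA.2 i]

lemma rowStochastic_Bk {P : ℕ → Matrix (Fin N) (Fin N) ℝ}
    (hP : ∀ t, rowStochastic (P t)) (s : ℕ) : ∀ k, rowStochastic (Bk P s k)
  | 0 => rowStochastic_one
  | k+1 => rowStochastic_mul (hP (s+k)) (rowStochastic_Bk hP s k)

lemma Bk_split (P : ℕ → Matrix (Fin N) (Fin N) ℝ) (s L : ℕ) :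
    ∀ k, Bk P s (k + L) = Bk P (s + L) k * Bk P s L
  | 0 => by simp [Bk]
  | k+1 => by
    have h1 : k + 1 + L = (k + L) + 1 := by omega
    rw [h1]
    show P (s + (k + L)) * Bk P s (k + L) = Bk P (s+L) (k+1) * Bk P s L
    rw [Bk_split P s L k]
    show P (s + (k + L)) * (Bk P (s+L) k * Bk P s L)
      = P (s + L + k) * Bk P (s+L) k * Bk P s L
    have e : s + (k + L) = s + L + k := by omega
    rw [← mul_assoc, e]

lemma Bk_entry_ge {G : SimpleGraph (Fin N)} {P : ℕ → Matrix (Fin N) (Fin N) ℝ} {ε : ℝ}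
    (hε : 0 ≤ ε) (hedge : ∀ t i j, G.Adj i j → ε ≤ P t i j)
    (hnn : ∀ t, rowStochastic (P t)) :
    ∀ k s (i j : Fin N), (∃ w : G.Walk i j, w.length = k) → ε ^ k ≤ Bk P s k i j := by
  intro k
  induction k with
  | zero =>
    rintro s i j ⟨w, hw⟩
    have := w.eq_of_length_eq_zero hw
    subst this
    simp [Bk, Matrix.one_apply]
  | succ k ih =>
    rintro s i j ⟨w, hw⟩
    cases w with
    | nil => simp at hw
    | cons h w' =>
      rename_i l
      simp only [SimpleGraph.Walk.length_cons, Nat.add_right_cancel_iff] at hw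
      show ε ^ (k+1) ≤ (P (s+k) * Bk P s k) i j
      rw [Matrix.mul_apply]
      have hterm : ε ^ (k+1) ≤ P (s+k) i l * Bk P s k l j := by
        rw [pow_succ, mul_comm (ε^k) ε]
        exact mul_le_mul (hedge (s+k) i l h) (ih s l j ⟨w', hw⟩)
          (pow_nonneg hε k) ((hnn (s+k)).1 i l)
      calc ε ^ (k+1) ≤ P (s+k) i l * Bk P s k l j := hterm
        _ ≤ ∑ m, P (s+k) i m * Bk P s k m j := by
          apply Finset.single_le_sum (f := fun m => P (s+k) i m * Bk P s k m j)
          · intro m _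
            exact mul_nonneg ((hnn (s+k)).1 i m) ((rowStochastic_Bk hnn s k).1 m j)
          · exact Finset.mem_univ l

lemma osc_Bk [NeZero N] {P : ℕ → Matrix (Fin N) (Fin N) ℝ}
    (hP : ∀ t, rowStochastic (P t)) {L : ℕ} (hL : 0 < L) {q₀ : ℝ} (hq₀ : 0 ≤ q₀)
    (hblock : ∀ s y, osc ((Bk P s L).mulVec y) ≤ q₀ * osc y) :
    ∀ t s (y : Fin N → ℝ), osc ((Bk P s t).mulVec y) ≤ q₀ ^ (t / L) * osc y := by
  intro t
  induction t using Nat.strong_induction_on with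
  | _ t ih =>
    intro s y
    rcases lt_or_ge t L with h | h
    · rw [Nat.div_eq_of_lt h]
      simpa using osc_mulVec_le' (rowStochastic_Bk hP s t) y
    · obtain ⟨k, rfl⟩ : ∃ k, t = k + L := ⟨t - L, by omega⟩
      rw [Bk_split, ← Matrix.mulVec_mulVec]
      calc osc ((Bk P (s+L) k).mulVec ((Bk P s L).mulVec y))
          ≤ q₀ ^ (k / L) * osc ((Bk P s L).mulVec y) := ih k (by omega) (s+L) _
        _ ≤ q₀ ^ (k / L) * (q₀ * osc y) :=
            mul_le_mul_of_nonneg_left (hblock s y) (pow_nonneg hq₀ _)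
        _ = q₀ ^ ((k + L) / L) * osc y := by
            rw [Nat.add_div_right k hL, pow_succ]
            ring

end Bk

/-! ### Graph-theoretic lemmas -/

section Graph
variable {N : ℕ} {G : SimpleGraph (Fin N)}

lemma exists_neighbor (hN : 2 ≤ N) (hconn : G.Connected) (i : Fin N) :
    ∃ j, G.Adj i j := by
  have hne : ∃ j : Fin N, j ≠ i := by
    refine ⟨if i = ⟨0, by omega⟩ then ⟨1, by omega⟩ else ⟨0, by omega⟩, ?_⟩
    split <;> simp_all <;> omega
  obtain ⟨j, hj⟩ := hne
  obtain ⟨w⟩ := hconn i j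
  cases w with
  | nil => exact absurd rfl hj.symm
  | cons h _ => exact ⟨_, h⟩

lemma exists_odd_closed_walk (hN : 2 ≤ N) (hconn : G.Connected)
    (hnb : ¬ G.Colorable 2) :
    ∃ (c : Fin N) (w : G.Walk c c), Odd w.length := by
  by_contra hcon
  push_neg at hcon
  simp only [Nat.not_odd_iff_even] at hcon
  apply hnb
  haveI : NeZero N := ⟨by omega⟩
  obtain ⟨v₀⟩ : Nonempty (Fin N) := inferInstance
  refine ⟨SimpleGraph.Coloring.mk
    (fun v => (⟨G.dist v₀ v % 2, Nat.mod_lt _ (by omega)⟩ : Fin 2)) ?_⟩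
  intro u v huv heq
  have heq' : G.dist v₀ u % 2 = G.dist v₀ v % 2 := by
    have := congrArg Fin.val heq
    simpa using this
  obtain ⟨p, hp⟩ := hconn.exists_walk_length_eq_dist v₀ u
  obtain ⟨q, hq⟩ := hconn.exists_walk_length_eq_dist v₀ v
  have hw := hcon v₀ (p.append (SimpleGraph.Walk.cons huv q.reverse))
  simp only [SimpleGraph.Walk.length_append, SimpleGraph.Walk.length_cons,
    SimpleGraph.Walk.length_reverse, hp, hq, Nat.even_iff] at hw
  omega

lemma exists_pad (hN : 2 ≤ N) (hconn : G.Connected) (j : Fin N) :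
    ∀ k : ℕ, ∃ w : G.Walk j j, w.length = 2 * k := by
  intro k
  induction k with
  | zero => exact ⟨SimpleGraph.Walk.nil, rfl⟩
  | succ k ih =>
    obtain ⟨w, hw⟩ := ih
    obtain ⟨n, hn⟩ := exists_neighbor hN hconn j
    exact ⟨SimpleGraph.Walk.cons hn (SimpleGraph.Walk.cons hn.symm w), by
      simp only [SimpleGraph.Walk.length_cons, hw]; omega⟩

lemma exists_uniform_length (hN : 2 ≤ N) (hconn : G.Connected)
    (hnb : ¬ G.Colorable 2) :
    ∃ L : ℕ, 0 < L ∧ ∀ i j : Fin N, ∃ w : G.Walk i j, w.length = L := by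
  obtain ⟨c, wodd, hodd⟩ := exists_odd_closed_walk hN hconn hnb
  set m := wodd.length with hm
  have f : ∀ v : Fin N, G.Walk v c := fun v => (hconn v c).some
  set A := Finset.univ.sup (fun v => (f v).length) with hA
  refine ⟨m + 2 * A + 2, by omega, ?_⟩
  intro i j
  set a := (f i).length with ha
  set b := (f j).length with hb
  have hia : a ≤ A := Finset.le_sup (f := fun v => (f v).length) (Finset.mem_univ i)
  have hib : b ≤ A := Finset.le_sup (f := fun v => (f v).length) (Finset.mem_univ j)
  set L := m + 2 * A + 2 with hL
  have hab : a + b ≤ L := by omega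
  set r := L - (a + b) with hr
  have hsum : a + b + r = L := by omega
  rcases Nat.even_or_odd r with he | ho
  · obtain ⟨k, hk⟩ := he
    obtain ⟨wp, hwp⟩ := exists_pad hN hconn j k
    refine ⟨((f i).append (f j).reverse).append wp, ?_⟩
    rw [SimpleGraph.Walk.length_append, SimpleGraph.Walk.length_append,
      SimpleGraph.Walk.length_reverse, hwp]
    omega
  · have hrm : m ≤ r := by omega
    have hev : Even (r - m) := Nat.Odd.sub_odd ho hodd
    obtain ⟨k, hk⟩ := hev
    obtain ⟨wp, hwp⟩ := exists_pad hN hconn j k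
    refine ⟨(((f i).append wodd).append (f j).reverse).append wp, ?_⟩
    rw [SimpleGraph.Walk.length_append, SimpleGraph.Walk.length_append,
      SimpleGraph.Walk.length_append, SimpleGraph.Walk.length_reverse, hwp]
    omega

end Graph

/-! ### Forward weight products -/

section WFm
variable {d : ℕ}

noncomputable def WFm (W : ℕ → Matrix (Fin d) (Fin d) ℝ) :
    ℕ → Matrix (Fin d) (Fin d) ℝ
  | 0 => 1
  | t+1 => WFm W t * W t

lemma WFm_le_Wabs (W : ℕ → Matrix (Fin d) (Fin d) ℝ) :
    ∀ t i j, |WFm W (t+1) i j| ≤ Wabs W t i j := by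
  intro t
  induction t with
  | zero =>
    intro i j
    show |((1 : Matrix (Fin d) (Fin d) ℝ) * W 0) i j| ≤ |W 0 i j|
    rw [one_mul]
  | succ t ih =>
    intro i j
    show |(WFm W (t+1) * W (t+1)) i j| ≤ (Wabs W t * (W (t+1)).map (fun x => |x|)) i j
    rw [Matrix.mul_apply, Matrix.mul_apply]
    calc |∑ l, WFm W (t+1) i l * W (t+1) l j|
        ≤ ∑ l, |WFm W (t+1) i l * W (t+1) l j| := Finset.abs_sum_le_sum_abs _ _
      _ ≤ ∑ l, Wabs W t i l * (W (t+1)).map (fun x => |x|) l j := by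
          apply Finset.sum_le_sum
          intro l _
          rw [abs_mul]
          exact mul_le_mul_of_nonneg_right (ih i l) (abs_nonneg _)

lemma WFm_bound (W : ℕ → Matrix (Fin d) (Fin d) ℝ) (C : ℝ)
    (hC : ∀ k i j, |Wabs W k i j| ≤ C) :
    ∀ t i j, |WFm W t i j| ≤ max C 1 := by
  intro t i j
  cases t with
  | zero =>
    show |(1 : Matrix (Fin d) (Fin d) ℝ) i j| ≤ max C 1
    refine le_trans ?_ (le_max_right C 1)
    by_cases h : i = j <;> simp [Matrix.one_apply, h]
  | succ t =>
    refine le_trans (WFm_le_Wabs W t i j) (le_trans ?_ (le_max_left C 1))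
    exact (le_abs_self _).trans (hC t i j)

end WFm

/-! ### Misc bounds -/

lemma gnnMu_le_aux {N d : ℕ} [NeZero N] (X : Matrix (Fin N) (Fin d) ℝ) (O : ℝ)
    (hO : 0 ≤ O) (h : ∀ j, osc (fun i => X i j) ≤ O) :
    gnnMu X ≤ Real.sqrt (N * d) * O := by
  unfold gnnMu frobNorm
  have hb : ∀ (i : Fin N) (j : Fin d),
      ((X - Matrix.of fun (_i : Fin N) (j : Fin d) => (∑ k, X k j) / (N:ℝ)) i j) ^ 2
        ≤ O ^ 2 := by
    intro i j
    have h1 : |X i j - (∑ k, X k j) / N| ≤ O :=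
      le_trans (abs_sub_mean_le_osc (fun i => X i j) i) (h j)
    calc ((X - Matrix.of fun (_i : Fin N) (j : Fin d) => (∑ k, X k j) / (N:ℝ)) i j) ^ 2
        = |X i j - (∑ k, X k j) / N| ^ 2 := by
          rw [Matrix.sub_apply, Matrix.of_apply, sq_abs]
      _ ≤ O ^ 2 := pow_le_pow_left₀ (abs_nonneg _) h1 2
  calc Real.sqrt (∑ i, ∑ j,
        ((X - Matrix.of fun (_i : Fin N) (j : Fin d) => (∑ k, X k j) / (N:ℝ)) i j) ^ 2)
      ≤ Real.sqrt (∑ _i : Fin N, ∑ _j : Fin d, O ^ 2) := by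
        apply Real.sqrt_le_sqrt
        exact Finset.sum_le_sum fun i _ => Finset.sum_le_sum fun j _ => hb i j
    _ = Real.sqrt ((N * d) * O ^ 2) := by
        congr 1
        simp [Finset.sum_const, Finset.card_univ]
        ring
    _ = Real.sqrt (N * d) * O := by
        rw [Real.sqrt_mul (by positivity), Real.sqrt_sq hO]

lemma geom_conv (q' : ℝ) (h0 : 1/2 ≤ q') (h1 : q' < 1) (L : ℕ) (hL : 0 < L) :
    ∃ q : ℝ, 0 < q ∧ q < 1 ∧ ∀ t : ℕ, q' ^ (t / L) ≤ 2 * q ^ t := by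
  have hq'pos : 0 < q' := by linarith
  set x : ℝ := (L : ℝ)⁻¹ with hx
  have hxpos : 0 < x := by positivity
  refine ⟨q' ^ x, Real.rpow_pos_of_pos hq'pos x, Real.rpow_lt_one hq'pos.le h1 hxpos, ?_⟩
  intro t
  have hqt : (q' ^ x) ^ t = q' ^ (x * t) := by
    rw [← Real.rpow_natCast (q' ^ x) t, ← Real.rpow_mul hq'pos.le]
  have hfloor : x * t - 1 ≤ ((t / L : ℕ) : ℝ) := by
    have h2 : (t : ℝ) < L * ((t / L : ℕ) + 1) := by
      exact_mod_cast Nat.lt_mul_div_succ t hL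
    have hLpos : (0:ℝ) < L := by exact_mod_cast hL
    rw [hx, inv_mul_eq_div, div_sub_one hLpos.ne', div_le_iff₀ hLpos]
    nlinarith
  have key : q' ^ ((t / L : ℕ) : ℝ) ≤ q' ^ (x * t - 1) :=
    Real.rpow_le_rpow_of_exponent_ge hq'pos h1.le hfloor
  rw [Real.rpow_natCast] at key
  rw [Real.rpow_sub hq'pos, Real.rpow_one] at key
  refine key.trans ?_
  rw [hqt, div_le_iff₀ hq'pos]
  have hpow : 0 < q' ^ (x * t) := Real.rpow_pos_of_pos hq'pos _
  nlinarith

lemma entry_abs_le {N n : ℕ} {M : Matrix (Fin N) (Fin N) ℝ} (hM : rowStochastic M)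
    (Y : Matrix (Fin N) (Fin n) ℝ) (R : ℝ) (hY : ∀ l j, |Y l j| ≤ R) :
    ∀ i j, |(M * Y) i j| ≤ R := by
  intro i j
  rw [Matrix.mul_apply]
  calc |∑ l, M i l * Y l j| ≤ ∑ l, |M i l * Y l j| := Finset.abs_sum_le_sum_abs _ _
    _ ≤ ∑ l, M i l * R := by
        apply Finset.sum_le_sum
        intro l _
        rw [abs_mul, abs_of_nonneg (hM.1 i l)]
        exact mul_le_mul_of_nonneg_left (hY l j) (hM.1 i l)
    _ = R := by rw [← Finset.sum_mul, hM.2 i, one_mul]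

end Stmt13Aux

/-- linear attention dynamics (σ = id): under (A1)-(A3), μ(X^(t)) ≤ C₁ qᵗ
for some q ∈ (0,1), C₁ > 0. -/
theorem stmt_13 (N d : ℕ) (hN : 2 ≤ N) (hd : 1 ≤ d)
    (G : SimpleGraph (Fin N)) [DecidableRel G.Adj]
    (hA1conn : G.Connected) (hA1nb : ¬ G.Colorable 2)
    (Ψ : (Fin d → ℝ) → (Fin d → ℝ) → ℝ)
    (hA2 : Continuous fun p : (Fin d → ℝ) × (Fin d → ℝ) => Ψ p.1 p.2)
    (W : ℕ → Matrix (Fin d) (Fin d) ℝ)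
    (X : ℕ → Matrix (Fin N) (Fin d) ℝ)
    (P : ℕ → Matrix (Fin N) (Fin N) ℝ)
    (hP : ∀ t i j, P t i j =
      if G.Adj i j then
        Real.exp (Ψ ((X t * W t) i) ((X t * W t) j)) /
          ∑ k ∈ G.neighborFinset i, Real.exp (Ψ ((X t * W t) i) ((X t * W t) k))
      else 0)
    (hdyn : ∀ t, X (t + 1) = P t * X t * W t)
    (hA3 : ∃ C : ℝ, ∀ k i j, |Wabs W k i j| ≤ C) :
    ∃ q : ℝ, 0 < q ∧ q < 1 ∧ ∃ C₁ > 0, ∀ t : ℕ, gnnMu (X t) ≤ C₁ * q ^ t := by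
  haveI : NeZero N := ⟨by omega⟩
  obtain ⟨C, hC⟩ := hA3
  -- bound on forward weight products
  set CW := max C 1 with hCWdef
  have hCW0 : (0:ℝ) ≤ CW := le_trans zero_le_one (le_max_right C 1)
  have hWb : ∀ t i j, |Stmt13Aux.WFm W t i j| ≤ CW := Stmt13Aux.WFm_bound W C hC
  set S : ℝ := ∑ l, ∑ k, |X 0 l k| with hSdef
  have hS0 : 0 ≤ S :=
    Finset.sum_nonneg fun l _ => Finset.sum_nonneg fun k _ => abs_nonneg _
  set R := S * CW with hRdef
  have hR0 : 0 ≤ R := mul_nonneg hS0 hCW0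
  have hYb : ∀ t l j, |(X 0 * Stmt13Aux.WFm W t) l j| ≤ R := by
    intro t l j
    rw [Matrix.mul_apply]
    calc |∑ k, X 0 l k * Stmt13Aux.WFm W t k j|
        ≤ ∑ k, |X 0 l k| * CW := by
          refine le_trans (Finset.abs_sum_le_sum_abs _ _)
            (Finset.sum_le_sum fun k _ => ?_)
          rw [abs_mul]
          exact mul_le_mul_of_nonneg_left (hWb t k j) (abs_nonneg _)
      _ = (∑ k, |X 0 l k|) * CW := by rw [Finset.sum_mul]
      _ ≤ S * CW := by
          refine mul_le_mul_of_nonneg_right ?_ hCW0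
          exact Finset.single_le_sum (f := fun l => ∑ k, |X 0 l k|)
            (fun l _ => Finset.sum_nonneg fun k _ => abs_nonneg _) (Finset.mem_univ l)
  -- every vertex has a neighbor; P t is row-stochastic
  have hnbr : ∀ i : Fin N, ∃ j, G.Adj i j := Stmt13Aux.exists_neighbor hN hA1conn
  have hPst : ∀ t, rowStochastic (P t) := by
    intro t
    constructor
    · intro i j
      rw [hP t i j]
      split
      · exact div_nonneg (Real.exp_pos _).le
          (Finset.sum_nonneg fun k _ => (Real.exp_pos _).le)
      · exact le_refl 0
    · intro i
      have hDpos : 0 < ∑ k ∈ G.neighborFinset i,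
          Real.exp (Ψ ((X t * W t) i) ((X t * W t) k)) := by
        obtain ⟨j', hj'⟩ := hnbr i
        exact Finset.sum_pos (fun k _ => Real.exp_pos _)
          ⟨j', by simp [SimpleGraph.mem_neighborFinset, hj']⟩
      rw [Finset.sum_congr rfl (fun j _ => hP t i j), ← Finset.sum_filter]
      have hfil : Finset.univ.filter (fun j => G.Adj i j) = G.neighborFinset i := by
        ext j
        simp [SimpleGraph.mem_neighborFinset]
      rw [hfil, ← Finset.sum_div, div_self hDpos.ne']
  -- product formula
  have hXf : ∀ t, X t = Stmt13Aux.Bk P 0 t * (X 0 * Stmt13Aux.WFm W t) := by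
    intro t
    induction t with
    | zero => simp [Stmt13Aux.Bk, Stmt13Aux.WFm]
    | succ t ih =>
      rw [hdyn t, ih]
      show _ = P (0 + t) * Stmt13Aux.Bk P 0 t * (X 0 * (Stmt13Aux.WFm W t * W t))
      rw [zero_add]
      simp only [Matrix.mul_assoc]
  have hXWf : ∀ t, X t * W t = Stmt13Aux.Bk P 0 t * (X 0 * Stmt13Aux.WFm W (t+1)) := by
    intro t
    rw [hXf t]
    show _ = Stmt13Aux.Bk P 0 t * (X 0 * (Stmt13Aux.WFm W t * W t))
    simp only [Matrix.mul_assoc]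
  have hXWb : ∀ t i j, |(X t * W t) i j| ≤ R := by
    intro t i j
    rw [hXWf t]
    exact Stmt13Aux.entry_abs_le (Stmt13Aux.rowStochastic_Bk hPst 0 t) _ R
      (hYb (t+1)) i j
  -- bound on the attention scores via compactness
  set K : Set (Fin d → ℝ) := Set.pi Set.univ (fun _ => Set.Icc (-R) R) with hKdef
  have hKcomp : IsCompact K := isCompact_univ_pi fun _ => isCompact_Icc
  obtain ⟨m, hm⟩ := (hKcomp.prod hKcomp).exists_bound_of_continuousOn hA2.continuousOn
  have hrow : ∀ t (i : Fin N), ((X t * W t) i) ∈ K := by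
    intro t i
    intro j _
    exact Set.mem_Icc.mpr (abs_le.mp (hXWb t i j))
  have hΨb : ∀ t (i j : Fin N), |Ψ ((X t * W t) i) ((X t * W t) j)| ≤ m := by
    intro t i j
    have := hm ((X t * W t) i, (X t * W t) j) (Set.mk_mem_prod (hrow t i) (hrow t j))
    simpa [Real.norm_eq_abs] using this
  -- uniform lower bound ε on edge weights
  have hNpos : (0:ℝ) < N := by
    have : (0:ℕ) < N := by omega
    exact_mod_cast this
  set ε := Real.exp (-m) / (N * Real.exp m) with hεdef
  have hεpos : 0 < ε := div_pos (Real.exp_pos _) (mul_pos hNpos (Real.exp_pos _))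
  have hedge : ∀ t (i j : Fin N), G.Adj i j → ε ≤ P t i j := by
    intro t i j hadj
    rw [hP t i j, if_pos hadj]
    have hDpos : 0 < ∑ k ∈ G.neighborFinset i,
        Real.exp (Ψ ((X t * W t) i) ((X t * W t) k)) := by
      obtain ⟨j', hj'⟩ := hnbr i
      exact Finset.sum_pos (fun k _ => Real.exp_pos _)
        ⟨j', by simp [SimpleGraph.mem_neighborFinset, hj']⟩
    have hnum : Real.exp (-m) ≤ Real.exp (Ψ ((X t * W t) i) ((X t * W t) j)) :=
      Real.exp_le_exp.mpr (neg_le_of_abs_le (hΨb t i j))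
    have hden : ∑ k ∈ G.neighborFinset i,
        Real.exp (Ψ ((X t * W t) i) ((X t * W t) k)) ≤ N * Real.exp m := by
      calc ∑ k ∈ G.neighborFinset i, Real.exp (Ψ ((X t * W t) i) ((X t * W t) k))
          ≤ ∑ _k ∈ G.neighborFinset i, Real.exp m :=
            Finset.sum_le_sum fun k _ =>
              Real.exp_le_exp.mpr (le_of_abs_le (hΨb t i k))
        _ = (G.neighborFinset i).card * Real.exp m := by
            rw [Finset.sum_const, nsmul_eq_mul]
        _ ≤ N * Real.exp m := by
            have hcard : (G.neighborFinset i).card ≤ N := by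
              have := Finset.card_le_univ (G.neighborFinset i)
              simpa using this
            exact mul_le_mul_of_nonneg_right (by exact_mod_cast hcard)
              (Real.exp_pos _).le
    exact div_le_div₀ (Real.exp_pos _).le hnum hDpos hden
  -- blocks of length L have all entries ≥ ε^L
  obtain ⟨L, hLpos, hLwalk⟩ := Stmt13Aux.exists_uniform_length hN hA1conn hA1nb
  set εL := ε ^ L with hεLdef
  have hεLpos : 0 < εL := pow_pos hεpos L
  have hblockpos : ∀ s (i j : Fin N), εL ≤ Stmt13Aux.Bk P s L i j := fun s i j =>
    Stmt13Aux.Bk_entry_ge hεpos.le hedge hPst L s i j (hLwalk i j)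
  set q₀ : ℝ := 1 - N * εL with hq₀def
  have hq₀0 : 0 ≤ q₀ :=
    Stmt13Aux.one_sub_nonneg (Stmt13Aux.rowStochastic_Bk hPst 0 L) εL (hblockpos 0)
  have hq₀1 : q₀ < 1 := by
    have hNε : 0 < (N:ℝ) * εL := mul_pos hNpos hεLpos
    simp only [hq₀def]
    linarith
  have hblock : ∀ s y, Stmt13Aux.osc ((Stmt13Aux.Bk P s L).mulVec y)
      ≤ q₀ * Stmt13Aux.osc y := fun s y =>
    Stmt13Aux.osc_mulVec_le (Stmt13Aux.rowStochastic_Bk hPst s L) εL (hblockpos s) y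
  have hosc := Stmt13Aux.osc_Bk hPst hLpos hq₀0 hblock
  -- oscillation of columns of X t
  have hcol : ∀ t (j : Fin d), (fun i => X t i j)
      = (Stmt13Aux.Bk P 0 t).mulVec (fun l => (X 0 * Stmt13Aux.WFm W t) l j) := by
    intro t j
    funext i
    rw [hXf t]
    simp [Matrix.mul_apply, Matrix.mulVec, dotProduct]
  have hoscY : ∀ t (j : Fin d),
      Stmt13Aux.osc (fun l => (X 0 * Stmt13Aux.WFm W t) l j) ≤ 2 * R :=
    fun t j => Stmt13Aux.osc_le_of_bound _ R (fun l => hYb t l j)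
  have hoscX : ∀ t (j : Fin d),
      Stmt13Aux.osc (fun i => X t i j) ≤ q₀ ^ (t / L) * (2 * R) := by
    intro t j
    rw [hcol t j]
    exact le_trans (hosc t 0 _)
      (mul_le_mul_of_nonneg_left (hoscY t j) (pow_nonneg hq₀0 _))
  -- convert to geometric decay
  set q' := max q₀ (1/2) with hq'def
  have h12 : 1/2 ≤ q' := le_max_right _ _
  have hq'1 : q' < 1 := max_lt hq₀1 (by norm_num)
  obtain ⟨q, hqpos, hq1, hgeo⟩ := Stmt13Aux.geom_conv q' h12 hq'1 L hLpos
  refine ⟨q, hqpos, hq1, Real.sqrt (N * d) * (2 * R) * 2 + 1, by positivity, ?_⟩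
  intro t
  have h1 : gnnMu (X t) ≤ Real.sqrt (N * d) * (q₀ ^ (t / L) * (2 * R)) :=
    Stmt13Aux.gnnMu_le_aux (X t) _
      (mul_nonneg (pow_nonneg hq₀0 _) (by positivity)) (hoscX t)
  have h2 : q₀ ^ (t / L) ≤ q' ^ (t / L) :=
    pow_le_pow_left₀ hq₀0 (le_max_left _ _) _
  have h3 : q' ^ (t / L) ≤ 2 * q ^ t := hgeo t
  have hsq : 0 ≤ Real.sqrt (N * d) := Real.sqrt_nonneg _
  have hqt : 0 < q ^ t := pow_pos hqpos t
  calc gnnMu (X t) ≤ Real.sqrt (N * d) * (q₀ ^ (t / L) * (2 * R)) := h1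
    _ ≤ Real.sqrt (N * d) * ((2 * q ^ t) * (2 * R)) := by
        refine mul_le_mul_of_nonneg_left ?_ hsq
        exact mul_le_mul_of_nonneg_right (h2.trans h3) (by positivity)
    _ = Real.sqrt (N * d) * (2 * R) * 2 * q ^ t := by ring
    _ ≤ (Real.sqrt (N * d) * (2 * R) * 2 + 1) * q ^ t := by nlinarith
end

section
/- Consider the attention-based GNN dynamics under assumptions (A1), (A2), (A3′) and (A4). Suppose in addition that there is a fixed connected undirected graph 𝒢′ on the vertex set {1,…,d} with a self-loop at every vertex such that for all t ≥ 0 and all i,j ∈ {1,…,d}: W^(t)_{ij} > 0 if and only if (i,j) is an edge of 𝒢′. Then all Nd entries of X^(t) converge to a single common value, i.e., lim_{t→∞} max_{i,k∈{1,…,N}, j,l∈{1,…,d}} |X^(t)_{ij} − X^(t)_{kl}| = 0. -/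
open Matrix Filter

set_option linter.unusedSectionVars false
set_option linter.unusedVariables false

namespace Stmt16Aux

variable {ι : Type*} [Fintype ι] [Nonempty ι]

/-- max entry of a vector -/
def vSup (u : ι → ℝ) : ℝ := Finset.univ.sup' Finset.univ_nonempty u
/-- min entry of a vector -/
def vInf (u : ι → ℝ) : ℝ := Finset.univ.inf' Finset.univ_nonempty u
/-- max with 0 -/
def vMp (u : ι → ℝ) : ℝ := max (vSup u) 0
def vMm (u : ι → ℝ) : ℝ := min (vInf u) 0

lemma le_vSup (u : ι → ℝ) (s : ι) : u s ≤ vSup u := Finset.le_sup' u (Finset.mem_univ s)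
lemma vInf_le (u : ι → ℝ) (s : ι) : vInf u ≤ u s := Finset.inf'_le u (Finset.mem_univ s)
lemma vInf_le_vSup (u : ι → ℝ) : vInf u ≤ vSup u :=
  (vInf_le u (Classical.arbitrary ι)).trans (le_vSup u _)
lemma vMp_nonneg (u : ι → ℝ) : 0 ≤ vMp u := le_max_right _ _
lemma vMm_nonpos (u : ι → ℝ) : vMm u ≤ 0 := min_le_right _ _
lemma vSup_le_vMp (u : ι → ℝ) : vSup u ≤ vMp u := le_max_left _ _
lemma vMm_le_vInf (u : ι → ℝ) : vMm u ≤ vInf u := min_le_left _ _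
lemma le_vMp (u : ι → ℝ) (s : ι) : u s ≤ vMp u := (le_vSup u s).trans (vSup_le_vMp u)
lemma vMm_le (u : ι → ℝ) (s : ι) : vMm u ≤ u s := (vMm_le_vInf u).trans (vInf_le u s)

lemma vSup_neg (u : ι → ℝ) : vSup (-u) = - vInf u := by
  apply le_antisymm
  · exact Finset.sup'_le _ _ fun b _ => by
      simpa using neg_le_neg (vInf_le u b)
  · obtain ⟨s, -, hs⟩ := Finset.exists_mem_eq_inf' (Finset.univ_nonempty) u
    have h2 : vInf u = u s := hs
    rw [h2]
    simpa using le_vSup (-u) s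

lemma vInf_neg (u : ι → ℝ) : vInf (-u) = - vSup u := by
  have := vSup_neg (-u)
  simp only [neg_neg] at this
  linarith

lemma vMp_neg (u : ι → ℝ) : vMp (-u) = - vMm u := by
  rw [vMp, vMm, vSup_neg]
  rw [neg_inf, neg_zero]


lemma vMm_neg (u : ι → ℝ) : vMm (-u) = - vMp u := by
  have := vMp_neg (-u); simp only [neg_neg] at this; linarith

/-- one-step upper bound for substochastic nonneg matrices -/
lemma mulVec_le_vMp (B : Matrix ι ι ℝ) (u : ι → ℝ)
    (hB0 : ∀ s q, 0 ≤ B s q) (hrow : ∀ s, ∑ q, B s q ≤ 1) (s : ι) :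
    (B *ᵥ u) s ≤ vMp u := by
  have h1 : (B *ᵥ u) s ≤ ∑ q, B s q * vMp u := by
    rw [Matrix.mulVec, dotProduct]
    exact Finset.sum_le_sum fun q _ =>
      mul_le_mul_of_nonneg_left (le_vMp u q) (hB0 s q)
  have h2 : ∑ q, B s q * vMp u = (∑ q, B s q) * vMp u := by
    rw [Finset.sum_mul]
  have h3 : (∑ q, B s q) * vMp u ≤ 1 * vMp u :=
    mul_le_mul_of_nonneg_right (hrow s) (vMp_nonneg u)
  rw [h2] at h1; rw [one_mul] at h3; linarith

lemma vMm_le_mulVec (B : Matrix ι ι ℝ) (u : ι → ℝ)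
    (hB0 : ∀ s q, 0 ≤ B s q) (hrow : ∀ s, ∑ q, B s q ≤ 1) (s : ι) :
    vMm u ≤ (B *ᵥ u) s := by
  have := mulVec_le_vMp B (-u) hB0 hrow s
  rw [Matrix.mulVec_neg, vMp_neg] at this
  simp only [Pi.neg_apply] at this
  linarith

/-- vMp of the image vector -/
lemma vMp_mulVec_le (B : Matrix ι ι ℝ) (u : ι → ℝ)
    (hB0 : ∀ s q, 0 ≤ B s q) (hrow : ∀ s, ∑ q, B s q ≤ 1) :
    vMp (B *ᵥ u) ≤ vMp u :=
  max_le (Finset.sup'_le _ _ fun s _ => mulVec_le_vMp B u hB0 hrow s) (vMp_nonneg u)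

lemma le_vMm_mulVec (B : Matrix ι ι ℝ) (u : ι → ℝ)
    (hB0 : ∀ s q, 0 ≤ B s q) (hrow : ∀ s, ∑ q, B s q ≤ 1) :
    vMm u ≤ vMm (B *ᵥ u) :=
  le_min (Finset.le_inf' _ _ fun s _ => vMm_le_mulVec B u hB0 hrow s) (vMm_nonpos u)

/-- KEY window contraction bound -/
lemma window_bound (B K : Matrix ι ι ℝ) (u : ι → ℝ) (η : ℝ) (hη : 0 < η)
    (hB0 : ∀ s q, 0 ≤ B s q) (hBK : ∀ s q, B s q ≤ K s q)
    (hKrow : ∀ s, ∑ q, K s q ≤ 1) (hKη : ∀ s q, η ≤ K s q) (s : ι) :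
    (B *ᵥ u) s ≤ vMp u - η / 2 * min (vSup u - vInf u) (vMp u) := by
  classical
  set ρ := ∑ q, B s q with hρ
  have hρ1 : ρ ≤ 1 := le_trans (Finset.sum_le_sum fun q _ => hBK s q) (hKrow s)
  have hmin_le1 : min (vSup u - vInf u) (vMp u) ≤ vMp u := min_le_right _ _
  have hminosc : min (vSup u - vInf u) (vMp u) ≤ vMp u - vInf u := by
    have := vSup_le_vMp u
    have := min_le_left (vSup u - vInf u) (vMp u)
    linarith
  rcases le_or_gt ρ (1 - η / 2) with hcase | hcase
  · -- heavily damped row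
    have h1 : (B *ᵥ u) s ≤ ρ * vMp u := by
      rw [Matrix.mulVec, dotProduct, hρ, Finset.sum_mul]
      exact Finset.sum_le_sum fun q _ =>
        mul_le_mul_of_nonneg_left (le_vMp u q) (hB0 s q)
    have h2 : ρ * vMp u ≤ (1 - η / 2) * vMp u :=
      mul_le_mul_of_nonneg_right hcase (vMp_nonneg u)
    have h3 : η / 2 * min (vSup u - vInf u) (vMp u) ≤ η / 2 * vMp u :=
      mul_le_mul_of_nonneg_left hmin_le1 (by linarith)
    nlinarith [vMp_nonneg u]
  · -- alive row: all entries of B at least η/2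
    obtain ⟨σ₀, -, hσ₀⟩ := Finset.exists_mem_eq_inf' (Finset.univ_nonempty) u
    have hinf0 : vInf u = u σ₀ := hσ₀
    have hKB0 : ∀ q, 0 ≤ K s q - B s q := fun q => by linarith [hBK s q]
    have hsingle : K s σ₀ - B s σ₀ ≤ ∑ q, (K s q - B s q) :=
      Finset.single_le_sum (fun q _ => hKB0 q) (Finset.mem_univ σ₀)
    have hsum : ∑ q, (K s q - B s q) = (∑ q, K s q) - ρ := by
      rw [Finset.sum_sub_distrib]
    have hb : η / 2 ≤ B s σ₀ := by
      have h4 := hKη s σ₀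
      have h5 := hKrow s
      rw [hsum] at hsingle
      linarith
    have hb1 : B s σ₀ ≤ 1 := by
      have : B s σ₀ ≤ ρ := Finset.single_le_sum (fun q _ => hB0 s q) (Finset.mem_univ σ₀)
      linarith
    -- split the sum
    have hsplit : (B *ᵥ u) s
        = B s σ₀ * u σ₀ + ∑ q ∈ Finset.univ.erase σ₀, B s q * u q := by
      rw [Matrix.mulVec, dotProduct]
      exact (Finset.add_sum_erase _ _ (Finset.mem_univ σ₀)).symm
    have herase : ∑ q ∈ Finset.univ.erase σ₀, B s q * u q
        ≤ (ρ - B s σ₀) * vMp u := by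
      have e1 : ∑ q ∈ Finset.univ.erase σ₀, B s q * u q
          ≤ ∑ q ∈ Finset.univ.erase σ₀, B s q * vMp u :=
        Finset.sum_le_sum fun q _ => mul_le_mul_of_nonneg_left (le_vMp u q) (hB0 s q)
      have e2 : ∑ q ∈ Finset.univ.erase σ₀, B s q = ρ - B s σ₀ := by
        have := Finset.add_sum_erase Finset.univ (fun q => B s q) (Finset.mem_univ σ₀)
        rw [hρ]; linarith
      rw [← Finset.sum_mul, e2] at e1
      exact e1
    have hrmb : (ρ - B s σ₀) * vMp u ≤ (1 - B s σ₀) * vMp u :=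
      mul_le_mul_of_nonneg_right (by linarith) (vMp_nonneg u)
    have hmain : B s σ₀ * u σ₀ + (1 - B s σ₀) * vMp u
        ≤ η / 2 * u σ₀ + (1 - η / 2) * vMp u := by
      nlinarith [le_vMp u σ₀, hb]
    have hfin : η / 2 * min (vSup u - vInf u) (vMp u) ≤ η / 2 * (vMp u - u σ₀) := by
      apply mul_le_mul_of_nonneg_left _ (by linarith)
      rw [← hinf0]; exact hminosc
    nlinarith

lemma window_bound_lower (B K : Matrix ι ι ℝ) (u : ι → ℝ) (η : ℝ) (hη : 0 < η)
    (hB0 : ∀ s q, 0 ≤ B s q) (hBK : ∀ s q, B s q ≤ K s q)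
    (hKrow : ∀ s, ∑ q, K s q ≤ 1) (hKη : ∀ s q, η ≤ K s q) (s : ι) :
    vMm u + η / 2 * min (vSup u - vInf u) (- vMm u) ≤ (B *ᵥ u) s := by
  have := window_bound B K (-u) η hη hB0 hBK hKrow hKη s
  rw [Matrix.mulVec_neg, vMp_neg, vSup_neg, vInf_neg] at this
  simp only [Pi.neg_apply] at this
  have heq : -vInf u - -vSup u = vSup u - vInf u := by ring
  rw [heq] at this
  linarith


end Stmt16Aux

namespace Stmt16Aux

/-- backward window product: A(t+k-1) ⋯ A(t), newest on the left -/
def winB {α : Type*} [Fintype α] [DecidableEq α] (A : ℕ → Matrix α α ℝ) (t : ℕ) :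
    ℕ → Matrix α α ℝ
  | 0 => 1
  | k + 1 => A (t + k) * winB A t k

/-- forward window product: A(t) ⋯ A(t+k-1) -/
def winF {α : Type*} [Fintype α] [DecidableEq α] (A : ℕ → Matrix α α ℝ) (t : ℕ) :
    ℕ → Matrix α α ℝ
  | 0 => 1
  | k + 1 => winF A t k * A (t + k)

variable {α : Type*} [Fintype α] [DecidableEq α]

lemma one_nonneg : ∀ i j : α, 0 ≤ (1 : Matrix α α ℝ) i j := fun i j => by
  rw [Matrix.one_apply]; split <;> norm_num

lemma mul_nonneg_mat {A B : Matrix α α ℝ} (hA : ∀ i j, 0 ≤ A i j)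
    (hB : ∀ i j, 0 ≤ B i j) : ∀ i j, 0 ≤ (A * B) i j := fun i j => by
  rw [Matrix.mul_apply]
  exact Finset.sum_nonneg fun k _ => mul_nonneg (hA i k) (hB k j)

lemma winB_nonneg (A : ℕ → Matrix α α ℝ) (hA : ∀ τ i j, 0 ≤ A τ i j) (t : ℕ) :
    ∀ k i j, 0 ≤ winB A t k i j := by
  intro k
  induction k with
  | zero => exact one_nonneg
  | succ k ih => exact mul_nonneg_mat (hA (t + k)) ih

lemma winF_nonneg (A : ℕ → Matrix α α ℝ) (hA : ∀ τ i j, 0 ≤ A τ i j) (t : ℕ) :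
    ∀ k i j, 0 ≤ winF A t k i j := by
  intro k
  induction k with
  | zero => exact one_nonneg
  | succ k ih => exact mul_nonneg_mat ih (hA (t + k))

lemma rowsum_mul_le_one {A B : Matrix α α ℝ} (hA0 : ∀ i j, 0 ≤ A i j)
    (hArow : ∀ i, ∑ j, A i j ≤ 1) (hB0 : ∀ i j, 0 ≤ B i j)
    (hBrow : ∀ i, ∑ j, B i j ≤ 1) (i : α) : ∑ j, (A * B) i j ≤ 1 := by
  have h1 : ∑ j, (A * B) i j = ∑ k, A i k * ∑ j, B k j := by
    simp_rw [Matrix.mul_apply, Finset.mul_sum]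
    rw [Finset.sum_comm]
  rw [h1]
  calc ∑ k, A i k * ∑ j, B k j ≤ ∑ k, A i k * 1 :=
        Finset.sum_le_sum fun k _ => mul_le_mul_of_nonneg_left (hBrow k) (hA0 i k)
    _ ≤ 1 := by simpa using hArow i

lemma winB_rowsum (A : ℕ → Matrix α α ℝ) (hA : ∀ τ i j, 0 ≤ A τ i j)
    (hrow : ∀ τ i, ∑ j, A τ i j ≤ 1) (t : ℕ) :
    ∀ k i, ∑ j, winB A t k i j ≤ 1 := by
  intro k
  induction k with
  | zero => intro i; simp [winB, Matrix.one_apply]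
  | succ k ih =>
      intro i
      exact rowsum_mul_le_one (hA (t + k)) (hrow (t + k))
        (winB_nonneg A hA t k) ih i

lemma mul_le_mul_mat {A B C D : Matrix α α ℝ} (hA0 : ∀ i j, 0 ≤ A i j)
    (hAB : ∀ i j, A i j ≤ B i j) (hC0 : ∀ i j, 0 ≤ C i j)
    (hCD : ∀ i j, C i j ≤ D i j) (hB0 : ∀ i j, 0 ≤ B i j) :
    ∀ i j, (A * C) i j ≤ (B * D) i j := fun i j => by
  rw [Matrix.mul_apply, Matrix.mul_apply]
  exact Finset.sum_le_sum fun k _ =>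
    mul_le_mul (hAB i k) (hCD k j) (hC0 k j) (hB0 i k)

lemma winB_le_winB (A K : ℕ → Matrix α α ℝ) (hA0 : ∀ τ i j, 0 ≤ A τ i j)
    (hAK : ∀ τ i j, A τ i j ≤ K τ i j) (hK0 : ∀ τ i j, 0 ≤ K τ i j) (t : ℕ) :
    ∀ k i j, winB A t k i j ≤ winB K t k i j := by
  intro k
  induction k with
  | zero => intro i j; exact le_refl _
  | succ k ih =>
      exact mul_le_mul_mat (hA0 (t + k)) (hAK (t + k))
        (winB_nonneg A hA0 t k) ih (hK0 (t + k))

end Stmt16Aux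


set_option linter.unusedSectionVars false
section GraphAux

variable {V : Type*} [Fintype V] (G : SimpleGraph V)

lemma stmt16_exists_adj (hconn : G.Connected) [Nontrivial V] (v : V) :
    ∃ u, G.Adj v u := by
  obtain ⟨w, hw⟩ := exists_ne v
  obtain ⟨p⟩ := hconn.preconnected v w
  cases p with
  | nil => exact absurd rfl hw.symm
  | cons h _ => exact ⟨_, h⟩

lemma stmt16_odd_closed_walk (hconn : G.Connected) (hnb : ¬ G.Colorable 2)
    [Nonempty V] :
    ∃ (v0 : V) (w : G.Walk v0 v0), Odd w.length := by
  by_contra h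
  push_neg at h
  apply hnb
  obtain v₀ := Classical.arbitrary V
  refine ⟨SimpleGraph.Coloring.mk
    (fun v => if Even (G.dist v₀ v) then (0 : Fin 2) else 1) ?_⟩
  intro u v huv heq
  obtain ⟨p, hp⟩ := (hconn.preconnected v₀ u).exists_walk_length_eq_dist
  obtain ⟨q, hq⟩ := (hconn.preconnected v₀ v).exists_walk_length_eq_dist
  have hcl := h v₀ (p.append ((SimpleGraph.Walk.cons huv q.reverse)))
  rw [Nat.odd_iff] at hcl
  have hlen : (p.append ((SimpleGraph.Walk.cons huv q.reverse))).length
      = G.dist v₀ u + (1 + G.dist v₀ v) := by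
    rw [SimpleGraph.Walk.length_append, SimpleGraph.Walk.length_cons,
      SimpleGraph.Walk.length_reverse, hp, hq]
    omega
  rw [hlen] at hcl
  by_cases h1 : Even (G.dist v₀ u) <;> by_cases h2 : Even (G.dist v₀ v) <;>
    simp [h1, h2] at heq <;>
    rw [Nat.even_iff] at * <;> omega

lemma stmt16_walk_pad (hnbr : ∀ v : V, ∃ u, G.Adj v u) (i k : V) (n : ℕ)
    (hw : ∃ w : G.Walk i k, w.length = n) (m : ℕ) :
    ∃ w : G.Walk i k, w.length = n + 2 * m := by
  induction m with
  | zero => simpa using hw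
  | succ m ih =>
      obtain ⟨w, hw'⟩ := ih
      obtain ⟨u, hu⟩ := hnbr i
      refine ⟨SimpleGraph.Walk.cons hu (SimpleGraph.Walk.cons hu.symm w), ?_⟩
      simp [SimpleGraph.Walk.length_cons, hw']
      omega

lemma stmt16_exists_walk_all_lengths (hconn : G.Connected) (hnb : ¬ G.Colorable 2)
    [Nontrivial V] :
    ∃ L0, ∀ L ≥ L0, ∀ i k : V, ∃ w : G.Walk i k, w.length = L := by
  have : Nonempty V := inferInstance
  obtain ⟨v0, w0, hw0⟩ := stmt16_odd_closed_walk G hconn hnb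
  set ℓ := w0.length with hℓ
  have hnbr : ∀ v : V, ∃ u, G.Adj v u := stmt16_exists_adj G hconn
  classical
  set f : V × V → ℕ := fun p => G.dist p.1 v0 + G.dist v0 p.2 with hf
  refine ⟨Finset.univ.sup f + ℓ, fun L hL i k => ?_⟩
  obtain ⟨p, hp⟩ := (hconn.preconnected i v0).exists_walk_length_eq_dist
  obtain ⟨q, hq⟩ := (hconn.preconnected v0 k).exists_walk_length_eq_dist
  have hfle : f (i, k) ≤ Finset.univ.sup f := Finset.le_sup (Finset.mem_univ _)
  have hn : G.dist i v0 + G.dist v0 k ≤ Finset.univ.sup f := hfle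
  rw [Nat.odd_iff] at hw0
  by_cases hpar : L % 2 = (G.dist i v0 + G.dist v0 k) % 2
  · obtain ⟨m, hm⟩ : ∃ m, L = (G.dist i v0 + G.dist v0 k) + 2 * m := by
      have : G.dist i v0 + G.dist v0 k ≤ L := by omega
      refine ⟨(L - (G.dist i v0 + G.dist v0 k)) / 2, by omega⟩
    rw [hm]
    exact stmt16_walk_pad G hnbr i k _ ⟨p.append q, by
      rw [SimpleGraph.Walk.length_append, hp, hq]⟩ m
  · obtain ⟨m, hm⟩ : ∃ m, L = (G.dist i v0 + ℓ + G.dist v0 k) + 2 * m := by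
      refine ⟨(L - (G.dist i v0 + ℓ + G.dist v0 k)) / 2, by omega⟩
    rw [hm]
    exact stmt16_walk_pad G hnbr i k _ ⟨p.append (w0.append q), by
      rw [SimpleGraph.Walk.length_append, SimpleGraph.Walk.length_append, hp, hq]
      omega⟩ m

end GraphAux

/-- under (A1), (A2), (A3′), (A4), if the sparsity pattern of all W^(t)
is a fixed connected graph 𝒢′ on {1,…,d} with self-loops at every vertex, then all
Nd entries of X^(t) converge to a single common value. -/
theorem stmt_16 (N d : ℕ) (hN : 2 ≤ N) (hd : 1 ≤ d)
    (G : SimpleGraph (Fin N)) [DecidableRel G.Adj]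
    (hA1conn : G.Connected) (hA1nb : ¬ G.Colorable 2)
    (Ψ : (Fin d → ℝ) → (Fin d → ℝ) → ℝ)
    (hA2 : Continuous fun p : (Fin d → ℝ) × (Fin d → ℝ) => Ψ p.1 p.2)
    (W : ℕ → Matrix (Fin d) (Fin d) ℝ) (σ : ℝ → ℝ)
    (X : ℕ → Matrix (Fin N) (Fin d) ℝ)
    (P : ℕ → Matrix (Fin N) (Fin N) ℝ)
    (hP : ∀ t i j, P t i j =
      if G.Adj i j then
        Real.exp (Ψ ((X t * W t) i) ((X t * W t) j)) /
          ∑ k ∈ G.neighborFinset i, Real.exp (Ψ ((X t * W t) i) ((X t * W t) k))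
      else 0)
    (hdyn : ∀ t, X (t + 1) = (P t * X t * W t).map σ)
    (hA3' : (∀ t, (∀ i j, 0 ≤ W t i j) ∧ ∀ j, ∑ i, W t i j ≤ 1) ∧
      ∃ ξ : ℝ, 0 < ξ ∧ ξ < 1 ∧ ∀ t,
        (∀ i, ξ ≤ W t i i) ∧
        ∀ i j, i ≠ j → 0 < W t i j → ξ ≤ W t i j ∧ ξ ≤ W t j i)
    (hA4 : σ 0 = 0 ∧ ∀ x : ℝ, x ≠ 0 → 0 ≤ σ x / x ∧ σ x / x ≤ 1)
    -- 𝒢′: a fixed undirected graph on {1,…,d}, with a self-loop at every vertex,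
    -- connected, whose edges are exactly the positivity pattern of every W^(t):
    (r : Fin d → Fin d → Prop)
    (hsym : ∀ i j, r i j → r j i) (hrefl : ∀ i, r i i)
    (hGconn : ∀ i j, Relation.ReflTransGen r i j)
    (hpattern : ∀ t i j, 0 < W t i j ↔ r i j) :
    Tendsto (fun t => ⨆ i : Fin N, ⨆ j : Fin d, ⨆ k : Fin N, ⨆ l : Fin d,
      |X t i j - X t k l|) atTop (nhds 0) := by
  classical
  obtain ⟨hWnn, ξ, hξ0, hξ1, hξp⟩ := hA3'
  obtain ⟨hσ0, hσr⟩ := hA4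
  haveI hNt : Nontrivial (Fin N) := by
    refine ⟨⟨0, by omega⟩, ⟨1, by omega⟩, ?_⟩
    simp [Fin.ext_iff]
  haveI : Nonempty (Fin N) := ⟨⟨0, by omega⟩⟩
  haveI : Nonempty (Fin d) := ⟨⟨0, by omega⟩⟩
  -- W basics
  have hW0 : ∀ t i j, 0 ≤ W t i j := fun t => (hWnn t).1
  have hWcol : ∀ t j, ∑ i, W t i j ≤ 1 := fun t => (hWnn t).2
  have hWξ : ∀ t i j, r i j → ξ ≤ W t i j := by
    intro t i j hr
    rcases eq_or_ne i j with rfl | hne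
    · exact (hξp t).1 i
    · exact ((hξp t).2 i j hne ((hpattern t i j).mpr hr)).1
  -- neighbors
  have hnbr : ∀ i : Fin N, ∃ j, G.Adj i j := stmt16_exists_adj G hA1conn
  have hnbF : ∀ i : Fin N, (G.neighborFinset i).Nonempty := by
    intro i
    obtain ⟨j, hj⟩ := hnbr i
    exact ⟨j, by simpa [SimpleGraph.mem_neighborFinset] using hj⟩
  -- P basics
  have hP0 : ∀ t i j, 0 ≤ P t i j := by
    intro t i j
    rw [hP]
    split
    · exact div_nonneg (Real.exp_pos _).le
        (Finset.sum_nonneg fun k _ => (Real.exp_pos _).le)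
    · exact le_refl 0
  have hDpos : ∀ t i,
      0 < ∑ k ∈ G.neighborFinset i, Real.exp (Ψ ((X t * W t) i) ((X t * W t) k)) :=
    fun t i => Finset.sum_pos (fun k _ => Real.exp_pos _) (hnbF i)
  have hProw : ∀ t i, ∑ j, P t i j = 1 := by
    intro t i
    have h1 : ∑ j, P t i j = ∑ j, if G.Adj i j then
        Real.exp (Ψ ((X t * W t) i) ((X t * W t) j)) /
          ∑ k ∈ G.neighborFinset i, Real.exp (Ψ ((X t * W t) i) ((X t * W t) k))
        else 0 :=
      Finset.sum_congr rfl fun j _ => hP t i j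
    rw [h1, ← Finset.sum_filter, ← SimpleGraph.neighborFinset_eq_filter,
      ← Finset.sum_div, div_self (hDpos t i).ne']
  -- sigma absolute bound
  have habs : ∀ y : ℝ, |σ y| ≤ |y| := by
    intro y
    by_cases hy : y = 0
    · simp [hy, hσ0]
    · obtain ⟨h1, h2⟩ := hσr y hy
      have h3 : σ y = (σ y / y) * y := (div_mul_cancel₀ _ hy).symm
      rw [h3, abs_mul]
      have h4 : |σ y / y| ≤ 1 := by rw [abs_of_nonneg h1]; exact h2
      nlinarith [abs_nonneg y]
  -- uniform bound on X
  set R : ℝ := Stmt16Aux.vMp (fun p : Fin N × Fin d => |X 0 p.1 p.2|) with hRdef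
  have hR0 : 0 ≤ R := Stmt16Aux.vMp_nonneg _
  have hX0R : ∀ i j, |X 0 i j| ≤ R := fun i j =>
    Stmt16Aux.le_vMp (fun p : Fin N × Fin d => |X 0 p.1 p.2|) (i, j)
  have hyform : ∀ t i j, (P t * X t * W t) i j
      = ∑ l, ∑ k, (P t i k * X t k l) * W t l j := by
    intro t i j
    rw [Matrix.mul_apply]
    refine Finset.sum_congr rfl fun l _ => ?_
    rw [Matrix.mul_apply, Finset.sum_mul]
  have hXR : ∀ t i j, |X t i j| ≤ R := by
    intro t
    induction t with
    | zero => exact hX0R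
    | succ t ih =>
        intro i j
        have hX1 : X (t+1) i j = σ ((P t * X t * W t) i j) := by rw [hdyn t]; rfl
        rw [hX1]
        refine le_trans (habs _) ?_
        rw [hyform t i j]
        calc |∑ l, ∑ k, (P t i k * X t k l) * W t l j|
            ≤ ∑ l, |∑ k, (P t i k * X t k l) * W t l j| := Finset.abs_sum_le_sum_abs _ _
          _ ≤ ∑ l, R * W t l j := by
              refine Finset.sum_le_sum fun l _ => ?_
              calc |∑ k, (P t i k * X t k l) * W t l j|
                  ≤ ∑ k, (P t i k * R) * W t l j := by
                    refine le_trans (Finset.abs_sum_le_sum_abs _ _) ?_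
                    refine Finset.sum_le_sum fun k _ => ?_
                    rw [abs_mul, abs_of_nonneg (hW0 t l j)]
                    refine mul_le_mul_of_nonneg_right ?_ (hW0 t l j)
                    rw [abs_mul, abs_of_nonneg (hP0 t i k)]
                    exact mul_le_mul_of_nonneg_left (ih k l) (hP0 t i k)
                _ = (∑ k, P t i k) * R * W t l j := by
                    rw [Finset.sum_mul, Finset.sum_mul]
                _ = R * W t l j := by rw [hProw t i, one_mul]
          _ = R * ∑ l, W t l j := by rw [Finset.mul_sum]
          _ ≤ R * 1 := mul_le_mul_of_nonneg_left (hWcol t j) hR0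
          _ = R := mul_one R
  have hXWR : ∀ t i m, |(X t * W t) i m| ≤ R := by
    intro t i m
    rw [Matrix.mul_apply]
    calc |∑ k, X t i k * W t k m| ≤ ∑ k, R * W t k m := by
          refine le_trans (Finset.abs_sum_le_sum_abs _ _) (Finset.sum_le_sum fun k _ => ?_)
          rw [abs_mul, abs_of_nonneg (hW0 t k m)]
          exact mul_le_mul_of_nonneg_right (hXR t i k) (hW0 t k m)
      _ = R * ∑ k, W t k m := by rw [Finset.mul_sum]
      _ ≤ R * 1 := mul_le_mul_of_nonneg_left (hWcol t m) hR0
      _ = R := mul_one R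
  -- compactness: uniform bound on Ψ
  have hQc : IsCompact (Set.Icc (fun _ => -R) (fun _ => R) : Set (Fin d → ℝ)) :=
    isCompact_Icc
  have hrowQ : ∀ t i, (X t * W t) i ∈ (Set.Icc (fun _ => -R) (fun _ => R) : Set (Fin d → ℝ)) := by
    intro t i
    rw [Set.mem_Icc]
    constructor <;> intro m
    · exact (abs_le.mp (hXWR t i m)).1
    · exact (abs_le.mp (hXWR t i m)).2
  obtain ⟨C, hC⟩ := (hQc.prod hQc).exists_bound_of_continuousOn hA2.continuousOn
  have hΨB : ∀ t i j, |Ψ ((X t * W t) i) ((X t * W t) j)| ≤ C := by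
    intro t i j
    have := hC ((X t * W t) i, (X t * W t) j) (Set.mk_mem_prod (hrowQ t i) (hrowQ t j))
    simpa [Real.norm_eq_abs] using this
  have hNpos : (0:ℝ) < N := by
    have : (2:ℝ) ≤ N := by exact_mod_cast hN
    linarith
  set ε : ℝ := Real.exp (-C) / (N * Real.exp C) with hεdef
  have hε0 : 0 < ε := div_pos (Real.exp_pos _) (mul_pos hNpos (Real.exp_pos _))
  have hPε : ∀ t i j, G.Adj i j → ε ≤ P t i j := by
    intro t i j hadj
    rw [hP t i j, if_pos hadj, hεdef]
    apply div_le_div₀ (Real.exp_pos _).le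
    · exact Real.exp_le_exp.mpr (by linarith [(abs_le.mp (hΨB t i j)).1])
    · exact hDpos t i
    · calc ∑ k ∈ G.neighborFinset i, Real.exp (Ψ ((X t * W t) i) ((X t * W t) k))
          ≤ ∑ _k ∈ G.neighborFinset i, Real.exp C :=
            Finset.sum_le_sum fun k _ => Real.exp_le_exp.mpr (abs_le.mp (hΨB t i k)).2
        _ = (G.neighborFinset i).card * Real.exp C := by
            rw [Finset.sum_const, nsmul_eq_mul]
        _ ≤ N * Real.exp C := by
            have h5 : (G.neighborFinset i).card ≤ N := by
              refine le_trans (Finset.card_le_univ _) ?_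
              simp
            exact mul_le_mul_of_nonneg_right (by exact_mod_cast h5) (Real.exp_pos _).le
  -- walk lengths
  obtain ⟨L0, hL0⟩ := stmt16_exists_walk_all_lengths G hA1conn hA1nb
  -- P window positivity
  have hPwin : ∀ k t (i j : Fin N), (∃ w : G.Walk i j, w.length = k) →
      ε ^ k ≤ Stmt16Aux.winB P t k i j := by
    intro k
    induction k with
    | zero =>
        rintro t i j ⟨w, hw⟩
        have : i = j := w.eq_of_length_eq_zero hw
        subst this
        simp [Stmt16Aux.winB, Matrix.one_apply]
    | succ k ih =>
        rintro t i j ⟨w, hw⟩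
        cases w with
        | nil => simp at hw
        | @cons _ m _ h p =>
            have h1 : ε ^ k ≤ Stmt16Aux.winB P t k m j := ih t m j ⟨p, by simpa using hw⟩
            have h2 : ε * ε ^ k ≤ P (t + k) i m * Stmt16Aux.winB P t k m j :=
              mul_le_mul (hPε (t+k) i m h) h1 (pow_nonneg hε0.le k) (hP0 (t+k) i m)
            have h3 : P (t + k) i m * Stmt16Aux.winB P t k m j
                ≤ ∑ m', P (t + k) i m' * Stmt16Aux.winB P t k m' j :=
              Finset.single_le_sum (fun m' _ => mul_nonneg (hP0 (t+k) i m')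
                (Stmt16Aux.winB_nonneg P hP0 t k m' j)) (Finset.mem_univ m)
            calc ε ^ (k+1) = ε * ε ^ k := by ring
              _ ≤ ∑ m', P (t + k) i m' * Stmt16Aux.winB P t k m' j := le_trans h2 h3
              _ = Stmt16Aux.winB P t (k+1) i j := by
                  simp [Stmt16Aux.winB, Matrix.mul_apply]
  -- W window positivity
  have hWw : ∀ l j : Fin d, ∃ n, ∀ t, ξ ^ n ≤ Stmt16Aux.winF W t n l j := by
    intro l j
    have hrtg := hGconn l j
    induction hrtg with
    | refl => exact ⟨0, fun t => by simp [Stmt16Aux.winF, Matrix.one_apply]⟩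
    | @tail b c hlb hbc ih =>
        obtain ⟨n, hn⟩ := ih
        refine ⟨n + 1, fun t => ?_⟩
        have h2 : ξ ^ n * ξ ≤ Stmt16Aux.winF W t n l b * W (t + n) b c :=
          mul_le_mul (hn t) (hWξ (t+n) b c hbc) hξ0.le
            (Stmt16Aux.winF_nonneg W hW0 t n l b)
        have h3 : Stmt16Aux.winF W t n l b * W (t + n) b c
            ≤ ∑ b', Stmt16Aux.winF W t n l b' * W (t + n) b' c :=
          Finset.single_le_sum (fun b' _ => mul_nonneg
            (Stmt16Aux.winF_nonneg W hW0 t n l b') (hW0 (t+n) b' c)) (Finset.mem_univ b)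
        calc ξ ^ (n+1) = ξ ^ n * ξ := by ring
          _ ≤ ∑ b', Stmt16Aux.winF W t n l b' * W (t + n) b' c := le_trans h2 h3
          _ = Stmt16Aux.winF W t (n+1) l c := by
              simp [Stmt16Aux.winF, Matrix.mul_apply]
  have hWpad : ∀ (l j : Fin d) n, (∀ t, ξ ^ n ≤ Stmt16Aux.winF W t n l j) →
      ∀ m, n ≤ m → ∀ t, ξ ^ m ≤ Stmt16Aux.winF W t m l j := by
    intro l j n hn m hm
    induction m, hm using Nat.le_induction with
    | base => exact hn
    | succ m hm ih =>
        intro t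
        have h2 : ξ ^ m * ξ ≤ Stmt16Aux.winF W t m l j * W (t + m) j j :=
          mul_le_mul (ih t) (hWξ (t+m) j j (hrefl j)) hξ0.le
            (Stmt16Aux.winF_nonneg W hW0 t m l j)
        have h3 : Stmt16Aux.winF W t m l j * W (t + m) j j
            ≤ ∑ b', Stmt16Aux.winF W t m l b' * W (t + m) b' j :=
          Finset.single_le_sum (fun b' _ => mul_nonneg
            (Stmt16Aux.winF_nonneg W hW0 t m l b') (hW0 (t+m) b' j)) (Finset.mem_univ j)
        calc ξ ^ (m+1) = ξ ^ m * ξ := by ring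
          _ ≤ ∑ b', Stmt16Aux.winF W t m l b' * W (t + m) b' j := le_trans h2 h3
          _ = Stmt16Aux.winF W t (m+1) l j := by
              simp [Stmt16Aux.winF, Matrix.mul_apply]
  choose fW hfW using hWw
  set LW : ℕ := Finset.univ.sup (fun p : Fin d × Fin d => fW p.1 p.2) with hLW
  set L : ℕ := max L0 LW with hL
  have hPwinL : ∀ t (i k : Fin N), ε ^ L ≤ Stmt16Aux.winB P t L i k := fun t i k =>
    hPwin L t i k (hL0 L (le_max_left _ _) i k)
  have hWwinL : ∀ t (l j : Fin d), ξ ^ L ≤ Stmt16Aux.winF W t L l j := by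
    intro t l j
    refine hWpad l j (fW l j) (hfW l j) L ?_ t
    calc fW l j ≤ LW := Finset.le_sup (f := fun p : Fin d × Fin d => fW p.1 p.2)
          (Finset.mem_univ (l, j))
      _ ≤ L := le_max_right _ _
  -- the Kronecker matrix K
  set K : ℕ → Matrix (Fin N × Fin d) (Fin N × Fin d) ℝ :=
    fun t => Matrix.of (fun p q => P t p.1 q.1 * W t q.2 p.2) with hKdef
  have hK0 : ∀ t p q, 0 ≤ K t p q := fun t p q =>
    mul_nonneg (hP0 t p.1 q.1) (hW0 t q.2 p.2)
  have hKrow : ∀ t p, ∑ q, K t p q ≤ 1 := by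
    intro t p
    calc ∑ q : Fin N × Fin d, K t p q = ∑ k, ∑ l, P t p.1 k * W t l p.2 := by
          rw [Fintype.sum_prod_type]; rfl
      _ = (∑ k, P t p.1 k) * (∑ l, W t l p.2) := by rw [Finset.sum_mul_sum]
      _ ≤ 1 := by rw [hProw t p.1, one_mul]; exact hWcol t p.2
  have hKfact : ∀ t n p q, Stmt16Aux.winB K t n p q
      = Stmt16Aux.winB P t n p.1 q.1 * Stmt16Aux.winF W t n q.2 p.2 := by
    intro t n
    induction n with
    | zero =>
        rintro ⟨i, j⟩ ⟨k, l⟩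
        show (1 : Matrix (Fin N × Fin d) (Fin N × Fin d) ℝ) (i,j) (k,l)
          = (1 : Matrix (Fin N) (Fin N) ℝ) i k * (1 : Matrix (Fin d) (Fin d) ℝ) l j
        rcases eq_or_ne i k with rfl | h1
        · rcases eq_or_ne j l with rfl | h2
          · simp
          · simp [Matrix.one_apply, Prod.ext_iff, h2, h2.symm]
        · simp [Matrix.one_apply, Prod.ext_iff, h1]
    | succ n ih =>
        rintro ⟨i, j⟩ ⟨k, l⟩
        show (K (t+n) * Stmt16Aux.winB K t n) (i,j) (k,l) = _
        rw [Matrix.mul_apply]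
        calc ∑ q', K (t+n) (i,j) q' * Stmt16Aux.winB K t n q' (k,l)
            = ∑ a, ∑ b, (P (t+n) i a * Stmt16Aux.winB P t n a k)
              * (Stmt16Aux.winF W t n l b * W (t+n) b j) := by
              rw [Fintype.sum_prod_type]
              refine Finset.sum_congr rfl fun a _ => Finset.sum_congr rfl fun b _ => ?_
              rw [ih (a,b) (k,l)]
              show (P (t+n) i a * W (t+n) b j) * _ = _
              ring
          _ = (∑ a, P (t+n) i a * Stmt16Aux.winB P t n a k)
              * (∑ b, Stmt16Aux.winF W t n l b * W (t+n) b j) := by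
              rw [Finset.sum_mul_sum]
          _ = Stmt16Aux.winB P t (n+1) i k * Stmt16Aux.winF W t (n+1) l j := by
              simp [Stmt16Aux.winB, Stmt16Aux.winF, Matrix.mul_apply]
  obtain ⟨η, hηdef⟩ : ∃ e : ℝ, e = ε ^ L * ξ ^ L := ⟨_, rfl⟩
  have hηpos : 0 < η := by rw [hηdef]; exact mul_pos (pow_pos hε0 L) (pow_pos hξ0 L)
  have hKwin0 : ∀ t p q, 0 ≤ Stmt16Aux.winB K t L p q := fun t =>
    Stmt16Aux.winB_nonneg K hK0 t L
  have hKwinη : ∀ t p q, η ≤ Stmt16Aux.winB K t L p q := by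
    intro t p q
    rw [hηdef, hKfact t L p q]
    exact mul_le_mul (hPwinL t p.1 q.1) (hWwinL t q.2 p.2)
      (pow_nonneg hξ0.le L) (le_trans (pow_nonneg hε0.le L) (hPwinL t p.1 q.1))
  have hKwinrow : ∀ t p, ∑ q, Stmt16Aux.winB K t L p q ≤ 1 := fun t =>
    Stmt16Aux.winB_rowsum K hK0 hKrow t L
  have hη1 : η ≤ 1 := by
    obtain p₀ := Classical.arbitrary (Fin N × Fin d)
    calc η ≤ Stmt16Aux.winB K 0 L p₀ p₀ := hKwinη 0 p₀ p₀
      _ ≤ ∑ q, Stmt16Aux.winB K 0 L p₀ q :=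
          Finset.single_le_sum (fun q _ => hKwin0 0 p₀ q) (Finset.mem_univ p₀)
      _ ≤ 1 := hKwinrow 0 p₀
  -- damping coefficients and matrix A
  set c : ℕ → Fin N → Fin d → ℝ := fun t i j =>
    if (P t * X t * W t) i j = 0 then 0
    else σ ((P t * X t * W t) i j) / (P t * X t * W t) i j with hcdef
  have hc0 : ∀ t i j, 0 ≤ c t i j := by
    intro t i j
    rw [hcdef]
    dsimp only
    split
    · exact le_refl 0
    · exact (hσr _ (by assumption)).1
  have hc1 : ∀ t i j, c t i j ≤ 1 := by
    intro t i j
    rw [hcdef]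
    dsimp only
    split
    · exact zero_le_one
    · exact (hσr _ (by assumption)).2
  have hcy : ∀ t i j, c t i j * (P t * X t * W t) i j = σ ((P t * X t * W t) i j) := by
    intro t i j
    rw [hcdef]
    dsimp only
    split
    · rename_i h
      rw [h, mul_zero, hσ0]
    · rename_i h
      rw [div_mul_cancel₀ _ h]
  set A : ℕ → Matrix (Fin N × Fin d) (Fin N × Fin d) ℝ :=
    fun t => Matrix.of (fun p q => c t p.1 p.2 * K t p q) with hAdef
  have hA0 : ∀ t p q, 0 ≤ A t p q := fun t p q =>
    mul_nonneg (hc0 t p.1 p.2) (hK0 t p q)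
  have hAK : ∀ t p q, A t p q ≤ K t p q := by
    intro t p q
    calc A t p q = c t p.1 p.2 * K t p q := rfl
      _ ≤ 1 * K t p q := mul_le_mul_of_nonneg_right (hc1 t p.1 p.2) (hK0 t p q)
      _ = K t p q := one_mul _
  have hArow : ∀ t p, ∑ q, A t p q ≤ 1 := fun t p =>
    le_trans (Finset.sum_le_sum fun q _ => hAK t p q) (hKrow t p)
  obtain ⟨u, hudef⟩ : ∃ f : ℕ → (Fin N × Fin d) → ℝ, ∀ t p, f t p = X t p.1 p.2 :=
    ⟨_, fun _ _ => rfl⟩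
  have hstep : ∀ t, u (t+1) = A t *ᵥ u t := by
    intro t
    funext p
    rcases p with ⟨i, j⟩
    have h1 : u (t+1) (i,j) = σ ((P t * X t * W t) i j) := by
      rw [hudef (t+1) (i,j), hdyn t]
      rfl
    rw [h1, ← hcy t i j]
    have h2 : (A t *ᵥ u t) (i,j) = c t i j * ∑ k, ∑ l, (P t i k * X t k l) * W t l j := by
      rw [Matrix.mulVec, dotProduct, Fintype.sum_prod_type, Finset.mul_sum]
      refine Finset.sum_congr rfl fun k _ => ?_
      rw [Finset.mul_sum]
      refine Finset.sum_congr rfl fun l _ => ?_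
      show A t (i,j) (k,l) * u t (k,l) = c t i j * ((P t i k * X t k l) * W t l j)
      have h3 : A t (i,j) (k,l) = c t i j * (P t i k * W t l j) := rfl
      have h4 : u t (k,l) = X t k l := hudef t (k,l)
      rw [h3, h4]
      ring
    rw [h2, hyform t i j, Finset.sum_comm]
  have hwin : ∀ t n, u (t + n) = Stmt16Aux.winB A t n *ᵥ u t := by
    intro t n
    induction n with
    | zero => simp [Stmt16Aux.winB, Matrix.one_mulVec]
    | succ n ih =>
        have h1 : t + (n+1) = (t + n) + 1 := rfl
        rw [h1, hstep (t+n), ih, Matrix.mulVec_mulVec]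
        rfl
  -- the Lyapunov quantities
  obtain ⟨Φ, hΦdef⟩ : ∃ f : ℕ → ℝ,
      ∀ t, f t = Stmt16Aux.vMp (u t) - Stmt16Aux.vMm (u t) := ⟨_, fun _ => rfl⟩
  obtain ⟨osc, hoscdef⟩ : ∃ f : ℕ → ℝ,
      ∀ t, f t = Stmt16Aux.vSup (u t) - Stmt16Aux.vInf (u t) := ⟨_, fun _ => rfl⟩
  have hosc0 : ∀ t, 0 ≤ osc t := fun t => by
    rw [hoscdef]; exact sub_nonneg.mpr (Stmt16Aux.vInf_le_vSup (u t))
  have hΦ0 : ∀ t, 0 ≤ Φ t := fun t => by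
    have h1 := Stmt16Aux.vMp_nonneg (u t)
    have h2 := Stmt16Aux.vMm_nonpos (u t)
    rw [hΦdef]
    linarith
  have hΦanti : Antitone Φ := by
    apply antitone_nat_of_succ_le
    intro t
    have h1 : Stmt16Aux.vMp (u (t+1)) ≤ Stmt16Aux.vMp (u t) := by
      rw [hstep t]
      exact Stmt16Aux.vMp_mulVec_le (A t) (u t) (hA0 t) (hArow t)
    have h2 : Stmt16Aux.vMm (u t) ≤ Stmt16Aux.vMm (u (t+1)) := by
      rw [hstep t]
      exact Stmt16Aux.le_vMm_mulVec (A t) (u t) (hA0 t) (hArow t)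
    rw [hΦdef, hΦdef]
    linarith
  have hwindow : ∀ t, η/4 * osc t ≤ Φ t - Φ (t + L) := by
    intro t
    rw [hΦdef, hΦdef, hoscdef]
    have hB0' := Stmt16Aux.winB_nonneg A hA0 t L
    have hBK' := Stmt16Aux.winB_le_winB A K hA0 hAK hK0 t L
    set o : ℝ := Stmt16Aux.vSup (u t) - Stmt16Aux.vInf (u t) with hodef
    have ho0 : 0 ≤ o := sub_nonneg.mpr (Stmt16Aux.vInf_le_vSup (u t))
    have hup : ∀ s, u (t+L) s ≤ Stmt16Aux.vMp (u t)
        - η/2 * min o (Stmt16Aux.vMp (u t)) := by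
      intro s
      rw [hwin t L]
      exact Stmt16Aux.window_bound _ _ (u t) η hηpos hB0' hBK' (hKwinrow t) (hKwinη t) s
    have hlo : ∀ s, Stmt16Aux.vMm (u t)
        + η/2 * min o (- Stmt16Aux.vMm (u t)) ≤ u (t+L) s := by
      intro s
      rw [hwin t L]
      exact Stmt16Aux.window_bound_lower _ _ (u t) η hηpos hB0' hBK' (hKwinrow t) (hKwinη t) s
    have hMp' : Stmt16Aux.vMp (u (t+L)) ≤ Stmt16Aux.vMp (u t)
        - η/2 * min o (Stmt16Aux.vMp (u t)) := by
      apply max_le (Finset.sup'_le _ _ fun s _ => hup s)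
      have h1 : min o (Stmt16Aux.vMp (u t)) ≤ Stmt16Aux.vMp (u t) := min_le_right _ _
      have ha : η/2 * min o (Stmt16Aux.vMp (u t)) ≤ η/2 * Stmt16Aux.vMp (u t) :=
        mul_le_mul_of_nonneg_left h1 (by linarith)
      have hb : 0 ≤ (1 - η/2) * Stmt16Aux.vMp (u t) :=
        mul_nonneg (by linarith) (Stmt16Aux.vMp_nonneg (u t))
      nlinarith
    have hMm' : Stmt16Aux.vMm (u t) + η/2 * min o (- Stmt16Aux.vMm (u t))
        ≤ Stmt16Aux.vMm (u (t+L)) := by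
      apply le_min (Finset.le_inf' _ _ fun s _ => hlo s)
      have h1 : min o (- Stmt16Aux.vMm (u t)) ≤ - Stmt16Aux.vMm (u t) := min_le_right _ _
      have ha : η/2 * min o (- Stmt16Aux.vMm (u t)) ≤ η/2 * (- Stmt16Aux.vMm (u t)) :=
        mul_le_mul_of_nonneg_left h1 (by linarith)
      have hb : 0 ≤ (1 - η/2) * (- Stmt16Aux.vMm (u t)) :=
        mul_nonneg (by linarith) (by linarith [Stmt16Aux.vMm_nonpos (u t)])
      nlinarith
    have hsum : o / 2 ≤ min o (Stmt16Aux.vMp (u t))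
        + min o (- Stmt16Aux.vMm (u t)) := by
      have h1 : o ≤ Stmt16Aux.vMp (u t) + (- Stmt16Aux.vMm (u t)) := by
        have h2 := Stmt16Aux.vSup_le_vMp (u t)
        have h3 := Stmt16Aux.vMm_le_vInf (u t)
        rw [hodef]
        linarith
      rcases le_total (o / 2) (Stmt16Aux.vMp (u t)) with h | h
      · have h4 : o / 2 ≤ min o (Stmt16Aux.vMp (u t)) :=
          le_min (by linarith) h
        have h5 : 0 ≤ min o (- Stmt16Aux.vMm (u t)) :=
          le_min ho0 (by linarith [Stmt16Aux.vMm_nonpos (u t)])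
        linarith
      · have h4 : o / 2 ≤ min o (- Stmt16Aux.vMm (u t)) :=
          le_min (by linarith) (by linarith)
        have h5 : 0 ≤ min o (Stmt16Aux.vMp (u t)) :=
          le_min ho0 (Stmt16Aux.vMp_nonneg (u t))
        linarith
    have h6 : η/2 * (o / 2) ≤ η/2 * (min o (Stmt16Aux.vMp (u t))
        + min o (- Stmt16Aux.vMm (u t))) :=
      mul_le_mul_of_nonneg_left hsum (by linarith)
    nlinarith
  -- convergence
  have hBdd : BddBelow (Set.range Φ) := by
    refine ⟨0, fun x hx => ?_⟩
    obtain ⟨t, ht⟩ := hx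
    rw [← ht]
    exact hΦ0 t
  have hΦtend : Tendsto Φ atTop (nhds (⨅ t, Φ t)) := tendsto_atTop_ciInf hΦanti hBdd
  have hdiff : Tendsto (fun t => Φ t - Φ (t + L)) atTop (nhds 0) := by
    have h2 : Tendsto (fun t => Φ (t + L)) atTop (nhds (⨅ t, Φ t)) :=
      hΦtend.comp (tendsto_add_atTop_nat L)
    simpa using hΦtend.sub h2
  have hosc_tend : Tendsto osc atTop (nhds 0) := by
    have hub : ∀ t, osc t ≤ 4/η * (Φ t - Φ (t+L)) := by
      intro t
      have h7 := hwindow t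
      have h8 : 0 < 4/η := by positivity
      calc osc t = 4/η * (η/4 * osc t) := by field_simp
        _ ≤ 4/η * (Φ t - Φ (t+L)) := mul_le_mul_of_nonneg_left h7 h8.le
    have hmul : Tendsto (fun t => 4/η * (Φ t - Φ (t + L))) atTop (nhds 0) := by
      have := hdiff.const_mul (4/η)
      simpa using this
    exact tendsto_of_tendsto_of_tendsto_of_le_of_le tendsto_const_nhds hmul hosc0 hub
  -- conclude
  have htarget_le : ∀ t, (⨆ i : Fin N, ⨆ j : Fin d, ⨆ k : Fin N, ⨆ l : Fin d,
      |X t i j - X t k l|) ≤ osc t := by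
    intro t
    rw [hoscdef]
    refine ciSup_le fun i => ciSup_le fun j => ciSup_le fun k => ciSup_le fun l => ?_
    have h1 := Stmt16Aux.le_vSup (u t) (i,j)
    have h2 := Stmt16Aux.vInf_le (u t) (k,l)
    have h3 := Stmt16Aux.le_vSup (u t) (k,l)
    have h4 := Stmt16Aux.vInf_le (u t) (i,j)
    rw [hudef] at h1 h2 h3 h4
    rw [abs_sub_le_iff]
    constructor <;> linarith
  have htarget_0 : ∀ t, (0:ℝ) ≤ (⨆ i : Fin N, ⨆ j : Fin d, ⨆ k : Fin N, ⨆ l : Fin d,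
      |X t i j - X t k l|) := by
    intro t
    obtain i0 := Classical.arbitrary (Fin N)
    obtain j0 := Classical.arbitrary (Fin d)
    calc (0:ℝ) = |X t i0 j0 - X t i0 j0| := by simp
      _ ≤ ⨆ l : Fin d, |X t i0 j0 - X t i0 l| :=
          le_ciSup (f := fun l : Fin d => |X t i0 j0 - X t i0 l|)
            (Set.Finite.bddAbove (Set.finite_range _)) j0
      _ ≤ ⨆ k : Fin N, ⨆ l : Fin d, |X t i0 j0 - X t k l| :=
          le_ciSup (f := fun k : Fin N => ⨆ l : Fin d, |X t i0 j0 - X t k l|)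
            (Set.Finite.bddAbove (Set.finite_range _)) i0
      _ ≤ ⨆ j : Fin d, ⨆ k : Fin N, ⨆ l : Fin d, |X t i0 j - X t k l| :=
          le_ciSup (f := fun j : Fin d => ⨆ k : Fin N, ⨆ l : Fin d, |X t i0 j - X t k l|)
            (Set.Finite.bddAbove (Set.finite_range _)) j0
      _ ≤ ⨆ i : Fin N, ⨆ j : Fin d, ⨆ k : Fin N, ⨆ l : Fin d, |X t i j - X t k l| :=
          le_ciSup (f := fun i : Fin N => ⨆ j : Fin d, ⨆ k : Fin N, ⨆ l : Fin d,
            |X t i j - X t k l|)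
            (Set.Finite.bddAbove (Set.finite_range _)) i0
  exact tendsto_of_tendsto_of_tendsto_of_le_of_le tendsto_const_nhds hosc_tend
    htarget_0 htarget_le
end

section
/- Let G be connected and non-bipartite with adjacency matrix A ∈ {0,1}^{N×N} and degree matrix D_deg := Diag(A1), and let 0 < ε ≤ 1/d_max where d_max is the maximum vertex degree of G (equivalently, 𝒫_{G,ε} is nonempty). Let λ be the second largest eigenvalue (counted with multiplicity) of the symmetric matrix D_deg^{−1/2} A D_deg^{−1/2}. Then λ ≤ JSR(𝒫̃_{G,ε}). -/
open Matrix Filter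

section aux17

lemma frob_nonneg {N d : ℕ} (X : Matrix (Fin N) (Fin d) ℝ) : 0 ≤ frobNorm X :=
  Real.sqrt_nonneg _

lemma frob_sq {N d : ℕ} (X : Matrix (Fin N) (Fin d) ℝ) :
    frobNorm X ^ 2 = ∑ i, ∑ j, (X i j) ^ 2 := by
  apply Real.sq_sqrt
  exact Finset.sum_nonneg fun i _ => Finset.sum_nonneg fun j _ => sq_nonneg _

lemma frob_transpose {N d : ℕ} (X : Matrix (Fin N) (Fin d) ℝ) :
    frobNorm Xᵀ = frobNorm X := by
  unfold frobNorm
  rw [Finset.sum_comm]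
  rfl

/-- Cauchy–Schwarz: ‖M *ᵥ x‖² ≤ frob² ‖x‖². -/
lemma mulVec_sq_le {N d : ℕ} (M : Matrix (Fin N) (Fin d) ℝ) (x : Fin d → ℝ) :
    ∑ i, ((M *ᵥ x) i) ^ 2 ≤ (∑ i, ∑ j, (M i j) ^ 2) * ∑ j, (x j) ^ 2 := by
  rw [Finset.sum_mul]
  apply Finset.sum_le_sum
  intro i _
  simpa [Matrix.mulVec, dotProduct] using
    Finset.sum_mul_sq_le_sq_mul_sq Finset.univ (fun j => M i j) x

lemma frob_mul_le {N d e : ℕ} (X : Matrix (Fin N) (Fin d) ℝ) (Y : Matrix (Fin d) (Fin e) ℝ) :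
    frobNorm (X * Y) ≤ frobNorm X * frobNorm Y := by
  unfold frobNorm
  rw [← Real.sqrt_mul (by positivity)]
  apply Real.sqrt_le_sqrt
  calc ∑ i, ∑ j, ((X * Y) i j) ^ 2
      ≤ ∑ i, ∑ j, (∑ k, (X i k) ^ 2) * (∑ k, (Y k j) ^ 2) := by
        apply Finset.sum_le_sum; intro i _
        apply Finset.sum_le_sum; intro j _
        simpa [Matrix.mul_apply] using
          Finset.sum_mul_sq_le_sq_mul_sq Finset.univ (fun k => X i k) (fun k => Y k j)
    _ = (∑ i, ∑ k, (X i k) ^ 2) * (∑ j, ∑ k, (Y k j) ^ 2) := by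
        rw [Finset.sum_mul_sum]
    _ = _ := by congr 1; exact Finset.sum_comm ..

lemma btb_eq {N : ℕ} (hN : 2 ≤ N) (B : Matrix (Fin (N-1)) (Fin N) ℝ)
    (hB1 : B * Bᵀ = 1) (hB2 : B *ᵥ (fun _ => (1:ℝ)) = 0) (i j : Fin N) :
    (Bᵀ * B) i j = (if i = j then (1:ℝ) else 0) - (N:ℝ)⁻¹ := by
  have hNpos : (0:ℝ) < N := by
    have : 0 < N := by omega
    exact_mod_cast this
  set R : Matrix (Fin 1) (Fin N) ℝ := Matrix.of fun _ _ => (Real.sqrt N)⁻¹ with hR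
  set C : Matrix (Fin (N-1) ⊕ Fin 1) (Fin N) ℝ := Matrix.fromRows B R with hC
  have hrowsum : ∀ a, ∑ k, B a k = 0 := by
    intro a
    have := congrFun hB2 a
    simpa [Matrix.mulVec, dotProduct] using this
  have hBR : B * Rᵀ = 0 := by
    ext a b
    simp only [Matrix.mul_apply, hR, Matrix.transpose_apply, Matrix.of_apply,
      Matrix.zero_apply]
    rw [← Finset.sum_mul, hrowsum, zero_mul]
  have hRB : R * Bᵀ = 0 := by
    ext a b
    simp only [Matrix.mul_apply, hR, Matrix.transpose_apply, Matrix.of_apply,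
      Matrix.zero_apply]
    rw [← Finset.mul_sum, hrowsum, mul_zero]
  have hsq : (Real.sqrt N)⁻¹ * (Real.sqrt N)⁻¹ = (N:ℝ)⁻¹ := by
    rw [← mul_inv, Real.mul_self_sqrt hNpos.le]
  have hRR : R * Rᵀ = 1 := by
    ext a b
    simp only [Matrix.mul_apply, hR, Matrix.transpose_apply, Matrix.of_apply]
    rw [Finset.sum_const, Finset.card_univ, Fintype.card_fin, nsmul_eq_mul, hsq]
    have ha : a = b := Subsingleton.elim a b
    rw [ha, Matrix.one_apply_eq]
    field_simp
  have hCC : C * Cᵀ = 1 := by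
    rw [hC, Matrix.transpose_fromRows, Matrix.fromRows_mul_fromCols, hB1, hBR, hRB, hRR,
      Matrix.fromBlocks_one]
  have e : Fin (N-1) ⊕ Fin 1 ≃ Fin N :=
    finSumFinEquiv.trans (finCongr (by omega))
  have hCtC : Cᵀ * C = 1 := (Matrix.mul_eq_one_comm_of_equiv e).mp hCC
  have h2 := congrFun (congrFun hCtC i) j
  rw [Matrix.mul_apply, Fintype.sum_sum_type] at h2
  simp only [hC, Matrix.transpose_apply, Matrix.fromRows_apply_inl, Matrix.fromRows_apply_inr,
    hR, Matrix.of_apply] at h2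
  rw [Finset.sum_const, Finset.card_univ, Fintype.card_fin, nsmul_eq_mul, hsq] at h2
  have h3 : (Bᵀ * B) i j = ∑ k, B k i * B k j := by
    simp [Matrix.mul_apply]
  rw [h3]
  have := h2
  rw [Matrix.one_apply] at this
  simp only [Nat.cast_one, one_mul] at this
  linarith [this]

lemma deg_pos {N : ℕ} (hN : 2 ≤ N) (G : SimpleGraph (Fin N)) [DecidableRel G.Adj]
    (hconn : G.Connected) : ∀ i, 0 < G.degree i := by
  intro i
  rw [G.degree_pos_iff_exists_adj]
  have hcard : 1 < Fintype.card (Fin N) := by simpa using (by omega : 1 < N)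
  obtain ⟨j, hj⟩ := Fintype.exists_ne_of_one_lt_card hcard i
  obtain ⟨w⟩ := hconn.preconnected i j
  cases w with
  | nil => exact absurd rfl hj
  | cons h _ => exact ⟨_, h⟩

lemma sum_adj_ite {N : ℕ} (G : SimpleGraph (Fin N)) [DecidableRel G.Adj] (i : Fin N) (c : ℝ) :
    ∑ j, (if G.Adj i j then c else 0) = (G.degree i : ℝ) * c := by
  rw [Finset.sum_ite, Finset.sum_const, Finset.sum_const, smul_zero, add_zero, nsmul_eq_mul]
  congr 2
  rw [SimpleGraph.degree]
  congr 1
  ext j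
  simp [SimpleGraph.mem_neighborFinset]

lemma pow_mulVec {N : ℕ} (M : Matrix (Fin N) (Fin N) ℝ) (x : Fin N → ℝ) (μ : ℝ)
    (h : M *ᵥ x = μ • x) (k : ℕ) : (M ^ k) *ᵥ x = (μ ^ k) • x := by
  induction k with
  | zero => simp
  | succ k ih =>
    rw [pow_succ, ← Matrix.mulVec_mulVec, h, Matrix.mulVec_smul, ih, smul_smul, ← pow_succ']

lemma core_bound {N m : ℕ} (hN : 2 ≤ N)
    (S P : Matrix (Fin N) (Fin N) ℝ) (B : Matrix (Fin m) (Fin N) ℝ)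
    (v : Fin N → ℝ)
    (hPDS : Pᵀ * Matrix.diagonal v = Matrix.diagonal v * S)
    (hv1 : ∀ i, 1 ≤ (v i)^2) (hvN : ∀ i, (v i)^2 ≤ N)
    (hSv : S *ᵥ v = v)
    (hBtB : ∀ i j, (Bᵀ * B) i j = (if i = j then (1:ℝ) else 0) - (N:ℝ)⁻¹)
    (hSsym : Sᵀ = S)
    (u0 uj : Fin N → ℝ) (μ0 lam : ℝ)
    (hS0 : S *ᵥ u0 = μ0 • u0) (hSj : S *ᵥ uj = lam • uj)
    (h00 : ∑ i, (u0 i)^2 = 1) (hjj : ∑ i, (uj i)^2 = 1) (h0j : ∑ i, u0 i * uj i = 0)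
    (hlam0 : 0 ≤ lam) (hlamμ : lam ≤ μ0) (k : ℕ) :
    lam ^ k * (Real.sqrt N)⁻¹ ≤ frobNorm ((B * P * Bᵀ) ^ k) := by
  have hNR : (0:ℝ) < N := by exact_mod_cast (by omega : 0 < N)
  -- choose coefficients
  set α : ℝ := ∑ i, uj i * v i with hα
  set β : ℝ := ∑ i, u0 i * v i with hβ
  obtain ⟨a, b, hab, hwv⟩ : ∃ a b : ℝ, 0 < a^2 + b^2 ∧ a * β + b * α = 0 := by
    by_cases hα0 : α = 0
    · exact ⟨0, 1, by norm_num, by simp [hα0]⟩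
    · refine ⟨α, -β, ?_, by ring⟩
      have : 0 < α^2 := pow_pos (abs_pos.mpr hα0) 2 |>.trans_le (by rw [sq_abs])
      nlinarith [sq_nonneg β, sq_abs α, abs_pos.mpr hα0]
  set w : Fin N → ℝ := fun i => a * u0 i + b * uj i with hw
  -- S^k w explicitly
  have hSkw : ∀ k : ℕ, (S ^ k) *ᵥ w = fun i => a * μ0 ^ k * u0 i + b * lam ^ k * uj i := by
    intro k
    have h1 := pow_mulVec S u0 μ0 hS0 k
    have h2 := pow_mulVec S uj lam hSj k
    funext i
    have : w = a • u0 + b • uj := by funext i; simp [hw, Pi.add_apply]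
    rw [this, Matrix.mulVec_add, Matrix.mulVec_smul, Matrix.mulVec_smul, h1, h2]
    simp only [Pi.add_apply, Pi.smul_apply, smul_eq_mul]
    ring
  -- squared norm of combinations
  have hcomb : ∀ A C : ℝ, ∑ i, (A * u0 i + C * uj i)^2 = A^2 + C^2 := by
    intro A C
    have : ∀ i, (A * u0 i + C * uj i)^2
        = A^2 * (u0 i)^2 + C^2 * (uj i)^2 + (2*A*C) * (u0 i * uj i) := by intro i; ring
    rw [Finset.sum_congr rfl fun i _ => this i]
    rw [Finset.sum_add_distrib, Finset.sum_add_distrib, ← Finset.mul_sum, ← Finset.mul_sum,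
      ← Finset.mul_sum, h00, hjj, h0j]
    ring
  -- z k
  set z : ℕ → (Fin N → ℝ) := fun k => Matrix.diagonal v *ᵥ ((S ^ k) *ᵥ w) with hz
  have hzsum : ∀ k, ∑ i, z k i = 0 := by
    intro k
    have hdot : ∑ i, z k i = v ⬝ᵥ ((S ^ k) *ᵥ w) := by
      simp only [hz, dotProduct]
      exact Finset.sum_congr rfl fun i _ => Matrix.mulVec_diagonal v _ i
    rw [hdot, dotProduct_mulVec, ← Matrix.mulVec_transpose, Matrix.transpose_pow, hSsym,
      pow_mulVec S v 1 (by simpa using hSv) k]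
    simp only [one_pow, one_smul]
    calc v ⬝ᵥ w = a * β + b * α := by
          simp only [dotProduct, hw, hα, hβ, Finset.mul_sum]
          rw [← Finset.sum_add_distrib]
          congr 1; funext i; ring
      _ = 0 := hwv
  have hBtBvec : ∀ x : Fin N → ℝ, ∑ i, x i = 0 → Bᵀ *ᵥ (B *ᵥ x) = x := by
    intro x hx
    funext i
    rw [Matrix.mulVec_mulVec]
    show ∑ j, (Bᵀ * B) i j * x j = x i
    calc ∑ j, (Bᵀ * B) i j * x j
        = ∑ j, ((if i = j then x j else 0) - (N:ℝ)⁻¹ * x j) := by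
          apply Finset.sum_congr rfl
          intro j _
          rw [hBtB]
          split <;> ring
      _ = x i - (N:ℝ)⁻¹ * ∑ j, x j := by
          rw [Finset.sum_sub_distrib, Finset.sum_ite_eq, if_pos (Finset.mem_univ i),
            ← Finset.mul_sum]
      _ = x i := by rw [hx, mul_zero, sub_zero]
  have hzsucc : ∀ k, Pᵀ *ᵥ z k = z (k+1) := by
    intro k
    show Pᵀ *ᵥ (Matrix.diagonal v *ᵥ (S ^ k *ᵥ w)) = Matrix.diagonal v *ᵥ (S ^ (k+1) *ᵥ w)
    have hstep : S ^ (k+1) *ᵥ w = S *ᵥ (S ^ k *ᵥ w) := by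
      rw [pow_succ', ← Matrix.mulVec_mulVec]
    rw [hstep, Matrix.mulVec_mulVec, hPDS, ← Matrix.mulVec_mulVec]
  have hTt : (B * P * Bᵀ)ᵀ = B * Pᵀ * Bᵀ := by
    rw [Matrix.transpose_mul, Matrix.transpose_mul, Matrix.transpose_transpose,
      Matrix.mul_assoc]
  have hTk : ∀ k, ((B * P * Bᵀ)ᵀ ^ k) *ᵥ (B *ᵥ z 0) = B *ᵥ z k := by
    intro k
    induction k with
    | zero => rw [pow_zero, Matrix.one_mulVec]
    | succ k ih =>
      rw [pow_succ', ← Matrix.mulVec_mulVec, ih, hTt, ← Matrix.mulVec_mulVec,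
        ← Matrix.mulVec_mulVec, hBtBvec (z k) (hzsum k), hzsucc]
  have hBnorm : ∀ x : Fin N → ℝ, ∑ i, x i = 0 →
      ∑ a', ((B *ᵥ x) a')^2 = ∑ i, (x i)^2 := by
    intro x hx
    have h1 : ∑ a', ((B *ᵥ x) a')^2 = (B *ᵥ x) ⬝ᵥ (B *ᵥ x) := by
      simp [dotProduct, sq]
    rw [h1, dotProduct_mulVec, ← Matrix.mulVec_transpose, hBtBvec x hx]
    simp [dotProduct, sq]
  have hzk_lower : ∀ k, (a^2 + b^2) * (lam ^ k)^2 ≤ ∑ i, (z k i)^2 := by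
    intro k
    have hz_ent : ∀ i, z k i = v i * ((S ^ k) *ᵥ w) i := by
      intro i
      exact Matrix.mulVec_diagonal v _ i
    have step1 : ∑ i, ((S ^ k *ᵥ w) i)^2 ≤ ∑ i, (z k i)^2 := by
      apply Finset.sum_le_sum
      intro i _
      rw [hz_ent i, mul_pow]
      nlinarith [hv1 i, sq_nonneg ((S ^ k *ᵥ w) i)]
    have step2 : ∑ i, ((S ^ k *ᵥ w) i)^2 = (a * μ0 ^ k)^2 + (b * lam ^ k)^2 := by
      simp only [hSkw k]
      exact hcomb _ _
    have step3 : (a^2 + b^2) * (lam ^ k)^2 ≤ (a * μ0 ^ k)^2 + (b * lam ^ k)^2 := by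
      have hpk : lam ^ k ≤ μ0 ^ k := pow_le_pow_left₀ hlam0 hlamμ k
      have hpk0 : 0 ≤ lam ^ k := pow_nonneg hlam0 k
      nlinarith [sq_nonneg a, sq_nonneg b, mul_le_mul hpk hpk hpk0 (hpk0.trans hpk)]
    linarith [step1, step2 ▸ step3]
  have hz0_upper : ∑ i, (z 0 i)^2 ≤ N * (a^2 + b^2) := by
    have hz0 : ∀ i, z 0 i = v i * w i := by
      intro i
      show (Matrix.diagonal v *ᵥ (S ^ 0 *ᵥ w)) i = v i * w i
      rw [pow_zero, Matrix.one_mulVec, Matrix.mulVec_diagonal]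
    calc ∑ i, (z 0 i)^2 = ∑ i, (v i)^2 * (w i)^2 := by
          apply Finset.sum_congr rfl; intro i _; rw [hz0 i]; ring
      _ ≤ ∑ i, (N:ℝ) * (w i)^2 := by
          apply Finset.sum_le_sum; intro i _
          exact mul_le_mul_of_nonneg_right (hvN i) (sq_nonneg _)
      _ = (N:ℝ) * (a^2 + b^2) := by
          rw [← Finset.mul_sum]
          congr 1
          simpa [hw] using hcomb a b
  -- Cauchy–Schwarz final chain
  have hCS := mulVec_sq_le ((B * P * Bᵀ)ᵀ ^ k) (B *ᵥ z 0)
  rw [hTk k, hBnorm (z k) (hzsum k), hBnorm (z 0) (hzsum 0)] at hCS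
  have hfrobeq : ∑ i, ∑ j, (((B * P * Bᵀ)ᵀ ^ k) i j)^2
      = frobNorm ((B * P * Bᵀ) ^ k) ^ 2 := by
    rw [← Matrix.transpose_pow, ← frob_transpose, frob_sq]
  rw [hfrobeq] at hCS
  set F := frobNorm ((B * P * Bᵀ) ^ k) with hF
  have hF0 : 0 ≤ F := frob_nonneg _
  have key : (a^2 + b^2) * (lam ^ k)^2 ≤ F^2 * ((N:ℝ) * (a^2 + b^2)) := by
    calc (a^2 + b^2) * (lam ^ k)^2 ≤ ∑ i, (z k i)^2 := hzk_lower k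
      _ ≤ F^2 * ∑ i, (z 0 i)^2 := hCS
      _ ≤ F^2 * ((N:ℝ) * (a^2 + b^2)) :=
          mul_le_mul_of_nonneg_left hz0_upper (sq_nonneg F)
  have key2 : (lam ^ k)^2 ≤ F^2 * (N:ℝ) := by
    have h' : (a^2 + b^2) * ((lam ^ k)^2) ≤ (a^2 + b^2) * (F^2 * (N:ℝ)) := by
      calc (a^2 + b^2) * ((lam ^ k)^2) ≤ F^2 * ((N:ℝ) * (a^2 + b^2)) := key
        _ = (a^2 + b^2) * (F^2 * (N:ℝ)) := by ring
    exact le_of_mul_le_mul_left h' hab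
  -- conclude
  have hsqN : (0:ℝ) < Real.sqrt N := Real.sqrt_pos.mpr hNR
  have hgoal_sq : (lam ^ k * (Real.sqrt N)⁻¹)^2 ≤ F^2 := by
    have h1 : (lam ^ k * (Real.sqrt N)⁻¹)^2 = (lam ^ k)^2 * ((N:ℝ))⁻¹ := by
      rw [mul_pow, ← Real.sqrt_inv, Real.sq_sqrt (by positivity)]
    rw [h1, ← div_eq_mul_inv, div_le_iff₀ hNR]
    exact key2
  have hlhs0 : 0 ≤ lam ^ k * (Real.sqrt N)⁻¹ := by positivity
  nlinarith [hgoal_sq, hlhs0, hF0]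

lemma jsr_ge {m : ℕ} (A : Set (Matrix (Fin m) (Fin m) ℝ)) (T : Matrix (Fin m) (Fin m) ℝ)
    (hT : T ∈ A) (c : ℝ) (hc : 1 ≤ c) (hA : ∀ Q ∈ A, frobNorm Q ≤ c)
    (lam c₀ : ℝ) (hc₀ : 0 < c₀) (hlam0 : 0 ≤ lam)
    (hfrob : ∀ k : ℕ, 1 ≤ k → lam ^ k * c₀ ≤ frobNorm (T ^ k)) :
    lam ≤ JSR A := by
  have hc0 : (0:ℝ) ≤ c := zero_le_one.trans hc
  set sk : ℕ → Set ℝ := fun k => {x : ℝ | ∃ M : Fin k → Matrix (Fin m) (Fin m) ℝ,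
      (∀ i, M i ∈ A) ∧ x = frobNorm (List.ofFn M).prod ^ (k : ℝ)⁻¹} with hsk
  have helem : ∀ (k : ℕ) (M : Fin (k+1) → Matrix (Fin m) (Fin m) ℝ), (∀ i, M i ∈ A) →
      frobNorm (List.ofFn M).prod ≤ c ^ (k+1) := by
    intro k
    induction k with
    | zero =>
      intro M hM
      have : (List.ofFn M).prod = M 0 := by
        simp [List.ofFn_succ]
      rw [this, pow_one]
      exact hA _ (hM 0)
    | succ k ih =>
      intro M hM
      have : (List.ofFn M).prod = M 0 * (List.ofFn (fun i : Fin (k+1) => M i.succ)).prod := by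
        rw [List.ofFn_succ, List.prod_cons]
      rw [this]
      calc frobNorm (M 0 * (List.ofFn (fun i : Fin (k+1) => M i.succ)).prod)
          ≤ frobNorm (M 0) * frobNorm (List.ofFn (fun i : Fin (k+1) => M i.succ)).prod :=
            frob_mul_le _ _
        _ ≤ c * c ^ (k+1) := by
            apply mul_le_mul (hA _ (hM 0)) (ih _ (fun i => hM i.succ)) (frob_nonneg _) hc0
        _ = c ^ (k+2) := by ring
  have hbdd : ∀ k, ∀ x ∈ sk k, x ≤ c := by
    intro k x hx
    obtain ⟨M, hM, rfl⟩ := hx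
    cases k with
    | zero => simp [hc]
    | succ k =>
      calc frobNorm (List.ofFn M).prod ^ ((k+1:ℕ) : ℝ)⁻¹
          ≤ (c ^ (k+1)) ^ ((k+1:ℕ) : ℝ)⁻¹ := by
            apply Real.rpow_le_rpow (frob_nonneg _) (helem k M hM) (by positivity)
        _ = c := by
            rw [← Real.rpow_natCast c (k+1), ← Real.rpow_mul hc0]
            rw [mul_inv_cancel₀ (by positivity), Real.rpow_one]
  have hskBdd : ∀ k, BddAbove (sk k) := fun k => ⟨c, fun x hx => hbdd k x hx⟩
  have hxk_mem : ∀ k : ℕ, frobNorm (T ^ k) ^ (k : ℝ)⁻¹ ∈ sk k := by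
    intro k
    exact ⟨fun _ => T, fun _ => hT, by rw [List.ofFn_const, List.prod_replicate]⟩
  have hgbdd : IsBoundedUnder (· ≤ ·) atTop (fun k => sSup (sk k)) :=
    isBoundedUnder_of ⟨c, fun k => Real.sSup_le (hbdd k) hc0⟩
  set L : ℕ → ℝ := fun k => lam * c₀ ^ ((k:ℝ))⁻¹ with hL
  have hLle : ∀ k : ℕ, 1 ≤ k → L k ≤ sSup (sk k) := by
    intro k hk
    have hkR : ((k:ℝ)) ≠ 0 := by positivity
    have h1 : lam ^ k * c₀ ≤ frobNorm (T ^ k) := hfrob k hk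
    have h2 : (lam ^ k * c₀) ^ ((k:ℝ))⁻¹ ≤ frobNorm (T ^ k) ^ ((k:ℝ))⁻¹ :=
      Real.rpow_le_rpow (by positivity) h1 (by positivity)
    have h3 : (lam ^ k * c₀) ^ ((k:ℝ))⁻¹ = L k := by
      rw [Real.mul_rpow (pow_nonneg hlam0 k) hc₀.le, hL]
      congr 1
      rw [← Real.rpow_natCast lam k, ← Real.rpow_mul hlam0, mul_inv_cancel₀ hkR,
        Real.rpow_one]
    calc L k = (lam ^ k * c₀) ^ ((k:ℝ))⁻¹ := h3.symm
      _ ≤ frobNorm (T ^ k) ^ ((k:ℝ))⁻¹ := h2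
      _ ≤ sSup (sk k) := le_csSup (hskBdd k) (hxk_mem k)
  have hLtend : Tendsto L atTop (nhds lam) := by
    have h0 : Tendsto (fun k : ℕ => ((k:ℝ))⁻¹) atTop (nhds 0) :=
      tendsto_inv_atTop_nhds_zero_nat
    have h1 : Tendsto (fun k : ℕ => c₀ ^ ((k:ℝ))⁻¹) atTop (nhds 1) := by
      have heq : (fun k : ℕ => c₀ ^ ((k:ℝ))⁻¹)
          = fun k : ℕ => Real.exp (Real.log c₀ * ((k:ℝ))⁻¹) := by
        funext k
        rw [Real.rpow_def_of_pos hc₀]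
      rw [heq]
      have h2 : Tendsto (fun k : ℕ => Real.log c₀ * ((k:ℝ))⁻¹) atTop (nhds 0) := by
        simpa using h0.const_mul (Real.log c₀)
      simpa [Function.comp_def] using (Real.continuous_exp.tendsto 0).comp h2
    simpa using tendsto_const_nhds.mul h1
  have hlimL : Filter.limsup L atTop = lam := hLtend.limsup_eq
  rw [show JSR A = Filter.limsup (fun k => sSup (sk k)) atTop from rfl, ← hlimL]
  apply Filter.limsup_le_limsup
  · exact Filter.eventually_atTop.mpr ⟨1, fun k hk => hLle k hk⟩
  · exact hLtend.isCoboundedUnder_le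
  · exact hgbdd

end aux17

/-- λ ≤ JSR(𝒫̃_{G,ε}), where λ is the second largest eigenvalue
(with multiplicity) of D_deg^{−1/2} A D_deg^{−1/2}. -/
theorem stmt_17 (N : ℕ) (hN : 2 ≤ N) (G : SimpleGraph (Fin N)) [DecidableRel G.Adj]
    (hconn : G.Connected) (hnb : ¬ G.Colorable 2)
    (ε : ℝ) (hε0 : 0 < ε) (hεdmax : ∀ i, ε * (G.degree i : ℝ) ≤ 1)
    (B : Matrix (Fin (N - 1)) (Fin N) ℝ)
    (hB1 : B * Bᵀ = 1) (hB2 : B *ᵥ (fun _ => (1 : ℝ)) = 0)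
    (S : Matrix (Fin N) (Fin N) ℝ)
    (hS : S = Matrix.diagonal (fun i => (Real.sqrt (G.degree i))⁻¹) *
      (Matrix.of fun i j => if G.Adj i j then (1 : ℝ) else 0) *
      Matrix.diagonal (fun i => (Real.sqrt (G.degree i))⁻¹))
    (hHerm : S.IsHermitian)
    (i₀ : Fin N) (hi₀ : ∀ i, hHerm.eigenvalues i ≤ hHerm.eigenvalues i₀)
    (lam : ℝ) (hlam : lam = ⨆ i : {i : Fin N // i ≠ i₀}, hHerm.eigenvalues i) :
    lam ≤ JSR {Q : Matrix (Fin (N - 1)) (Fin (N - 1)) ℝ | ∃ P ∈ Pset G ε, Q = B * P * Bᵀ} := by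
  -- setup
  have hdeg : ∀ i, 0 < G.degree i := deg_pos hN G hconn
  have hdR : ∀ i, (0:ℝ) < (G.degree i : ℝ) := fun i => by exact_mod_cast hdeg i
  have hsqd : ∀ i, (0:ℝ) < Real.sqrt (G.degree i) := fun i => Real.sqrt_pos.mpr (hdR i)
  set v : Fin N → ℝ := fun i => Real.sqrt (G.degree i) with hv
  have hv2 : ∀ i, (v i)^2 = (G.degree i : ℝ) := fun i => Real.sq_sqrt (hdR i).le
  have hv1 : ∀ i, 1 ≤ (v i)^2 := by
    intro i; rw [hv2]; exact_mod_cast hdeg i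
  have hvN : ∀ i, (v i)^2 ≤ (N:ℝ) := by
    intro i; rw [hv2]
    have := G.degree_lt_card_verts i
    rw [Fintype.card_fin] at this
    exact_mod_cast this.le
  -- the uniform random walk matrix
  set P : Matrix (Fin N) (Fin N) ℝ :=
    Matrix.of fun i j => if G.Adj i j then ((G.degree i : ℝ))⁻¹ else 0 with hPdef
  have hP : P ∈ Pset G ε := by
    refine ⟨⟨fun i j => ?_, fun i => ?_⟩, fun i j hij => ⟨?_, ?_⟩, fun i j hij => by
      simp [hPdef, hij]⟩
    · simp only [hPdef, Matrix.of_apply]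
      split
      · exact (inv_nonneg).mpr (hdR i).le
      · exact le_rfl
    · simp only [hPdef, Matrix.of_apply]
      rw [sum_adj_ite]
      exact mul_inv_cancel₀ (ne_of_gt (hdR i))
    · simp only [hPdef, Matrix.of_apply, if_pos hij]
      have : ε ≤ 1 / (G.degree i : ℝ) := (le_div_iff₀ (hdR i)).mpr (by linarith [hεdmax i])
      simpa [one_div] using this
    · simp only [hPdef, Matrix.of_apply, if_pos hij]
      have h1 : (1:ℝ) ≤ (G.degree i : ℝ) := by exact_mod_cast hdeg i
      exact inv_le_one_of_one_le₀ h1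
  -- entries of S
  have happ : ∀ i j, S i j = (Real.sqrt (G.degree i))⁻¹ * (if G.Adj i j then (1:ℝ) else 0)
      * (Real.sqrt (G.degree j))⁻¹ := by
    intro i j
    rw [hS]
    simp [Matrix.mul_apply, Matrix.diagonal, Finset.mul_sum, Finset.sum_mul]
    rw [Finset.sum_eq_single i]
    · split <;> simp
    · intro x _ hxi
      split
      · rw [if_neg (fun h => hxi h.symm)]
      · rfl
    · intro h; exact absurd (Finset.mem_univ i) h
  -- S v = v
  have hSv : S *ᵥ v = v := by
    funext i
    rw [Matrix.mulVec]
    simp only [dotProduct, happ]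
    have hstep : ∀ j, (Real.sqrt (G.degree i))⁻¹ * (if G.Adj i j then (1:ℝ) else 0)
        * (Real.sqrt (G.degree j))⁻¹ * v j
        = (if G.Adj i j then (Real.sqrt (G.degree i))⁻¹ else 0) := by
      intro j
      split <;> simp [hv, mul_assoc, inv_mul_cancel₀ (ne_of_gt (hsqd j))]
    rw [Finset.sum_congr rfl (fun j _ => hstep j), sum_adj_ite]
    rw [eq_comm, eq_mul_inv_iff_mul_eq₀ (hsqd i).ne']
    exact Real.mul_self_sqrt (hdR i).le
  -- Pᵀ D = D S
  have hPDS : Pᵀ * Matrix.diagonal v = Matrix.diagonal v * S := by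
    ext i j
    rw [Matrix.mul_diagonal, Matrix.diagonal_mul, happ, Matrix.transpose_apply, hPdef,
      Matrix.of_apply]
    by_cases h : G.Adj i j
    · have h1 := ne_of_gt (hsqd i)
      have h2 := ne_of_gt (hsqd j)
      have key : ((G.degree j : ℝ))⁻¹ * Real.sqrt (G.degree j)
          = (Real.sqrt (G.degree j))⁻¹ := by
        field_simp
        rw [Real.sq_sqrt (hdR j).le]
        exact div_self (ne_of_gt (hdR j))
      rw [if_pos h.symm, if_pos h, mul_one, ← mul_assoc, mul_inv_cancel₀ h1, one_mul]
      exact key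
    · rw [if_neg (fun hh => h hh.symm), if_neg h]
      simp
  -- BᵀB
  have hBtB : ∀ i j, (Bᵀ * B) i j = (if i = j then (1:ℝ) else 0) - (N:ℝ)⁻¹ :=
    btb_eq hN B hB1 hB2
  -- S symmetric as transpose
  have hSsym : Sᵀ = S := by
    ext i j
    have := congrFun (congrFun hHerm i) j
    simpa using this
  -- eigen data
  have hne : Nonempty {i : Fin N // i ≠ i₀} := by
    have hcard : 1 < Fintype.card (Fin N) := by simpa using (by omega : 1 < N)
    obtain ⟨j, hj⟩ := Fintype.exists_ne_of_one_lt_card hcard i₀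
    exact ⟨⟨j, hj⟩⟩
  haveI := hne
  obtain ⟨j, hj⟩ := Finite.exists_max (fun i : {i : Fin N // i ≠ i₀} => hHerm.eigenvalues i)
  have hlamj : lam = hHerm.eigenvalues j := by
    rw [hlam]
    apply le_antisymm
    · exact ciSup_le hj
    · exact le_ciSup (Set.Finite.bddAbove
        (Set.finite_range (fun i : {i : Fin N // i ≠ i₀} => hHerm.eigenvalues i))) j
  set u0 : Fin N → ℝ := ⇑(hHerm.eigenvectorBasis i₀) with hu0
  set uj : Fin N → ℝ := ⇑(hHerm.eigenvectorBasis (j : Fin N)) with huj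
  have hS0 : S *ᵥ u0 = hHerm.eigenvalues i₀ • u0 := hHerm.mulVec_eigenvectorBasis i₀
  have hSj' : S *ᵥ uj = hHerm.eigenvalues (j : Fin N) • uj :=
    hHerm.mulVec_eigenvectorBasis (j : Fin N)
  have hSj : S *ᵥ uj = lam • uj := by rw [hSj', ← hlamj]
  have horth : ∀ a b : Fin N, (∑ i, hHerm.eigenvectorBasis a i * hHerm.eigenvectorBasis b i)
      = if a = b then (1:ℝ) else 0 := by
    intro a b
    have horm := hHerm.eigenvectorBasis.orthonormal
    rw [orthonormal_iff_ite] at horm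
    have h3 := horm a b
    rw [PiLp.inner_apply] at h3
    simpa [RCLike.inner_apply, mul_comm] using h3
  have h00 : ∑ i, (u0 i)^2 = 1 := by
    have := horth i₀ i₀
    rw [if_pos rfl] at this
    rw [← this]
    exact Finset.sum_congr rfl fun i _ => pow_two (u0 i)
  have hjj : ∑ i, (uj i)^2 = 1 := by
    have := horth (j : Fin N) (j : Fin N)
    rw [if_pos rfl] at this
    rw [← this]
    exact Finset.sum_congr rfl fun i _ => pow_two (uj i)
  have h0j : ∑ i, u0 i * uj i = 0 := by
    have := horth i₀ (j : Fin N)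
    rwa [if_neg (fun h => j.prop h.symm)] at this
  have hlamμ : lam ≤ hHerm.eigenvalues i₀ := hlamj ▸ hi₀ (j : Fin N)
  -- bound on elements of the JSR set
  set c : ℝ := max (frobNorm B * (N:ℝ) * frobNorm B) 1 with hc
  have hc1 : (1:ℝ) ≤ c := le_max_right _ _
  have hA : ∀ Q ∈ {Q : Matrix (Fin (N - 1)) (Fin (N - 1)) ℝ |
      ∃ P ∈ Pset G ε, Q = B * P * Bᵀ}, frobNorm Q ≤ c := by
    rintro Q ⟨P', hP', rfl⟩
    have hent : ∀ i jj, (P' i jj)^2 ≤ 1 := by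
      intro i jj
      by_cases h : G.Adj i jj
      · have h1 := (hP'.2.1 i jj h).2
        have h2 := hP'.1.1 i jj
        nlinarith
      · rw [hP'.2.2 i jj h]
        norm_num
    have hfrobP : frobNorm P' ≤ (N:ℝ) := by
      have hsum : ∑ i, ∑ jj, (P' i jj)^2 ≤ (N:ℝ) * (N:ℝ) := by
        calc ∑ i, ∑ jj, (P' i jj)^2 ≤ ∑ _i : Fin N, ∑ _jj : Fin N, (1:ℝ) :=
              Finset.sum_le_sum fun i _ => Finset.sum_le_sum fun jj _ => hent i jj
          _ = (N:ℝ) * (N:ℝ) := by simp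
      calc frobNorm P' ≤ Real.sqrt ((N:ℝ) * (N:ℝ)) := Real.sqrt_le_sqrt hsum
        _ = (N:ℝ) := Real.sqrt_mul_self (by positivity)
    calc frobNorm (B * P' * Bᵀ) ≤ frobNorm (B * P') * frobNorm Bᵀ := frob_mul_le _ _
      _ ≤ frobNorm B * frobNorm P' * frobNorm Bᵀ :=
          mul_le_mul_of_nonneg_right (frob_mul_le _ _) (frob_nonneg _)
      _ ≤ frobNorm B * (N:ℝ) * frobNorm B := by
          rw [frob_transpose]
          apply mul_le_mul_of_nonneg_right _ (frob_nonneg _)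
          exact mul_le_mul_of_nonneg_left hfrobP (frob_nonneg _)
      _ ≤ c := le_max_left _ _
  have hT : B * P * Bᵀ ∈ {Q : Matrix (Fin (N - 1)) (Fin (N - 1)) ℝ |
      ∃ P ∈ Pset G ε, Q = B * P * Bᵀ} := ⟨P, hP, rfl⟩
  by_cases hlam0 : 0 ≤ lam
  · -- main case
    have hcore : ∀ k : ℕ, 1 ≤ k →
        lam ^ k * (Real.sqrt N)⁻¹ ≤ frobNorm ((B * P * Bᵀ) ^ k) := by
      intro k _
      exact core_bound hN S P B v hPDS hv1 hvN hSv hBtB hSsym u0 uj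
        (hHerm.eigenvalues i₀) lam hS0 hSj h00 hjj h0j hlam0 hlamμ k
    exact jsr_ge _ (B * P * Bᵀ) hT c hc1 hA lam (Real.sqrt N)⁻¹
      (by positivity) hlam0 hcore
  · -- lam < 0
    push_neg at hlam0
    have h0 : (0:ℝ) ≤ JSR {Q : Matrix (Fin (N - 1)) (Fin (N - 1)) ℝ |
        ∃ P ∈ Pset G ε, Q = B * P * Bᵀ} := by
      apply jsr_ge _ (B * P * Bᵀ) hT c hc1 hA 0 1 one_pos le_rfl
      intro k hk
      rw [zero_pow (by omega), zero_mul]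
      exact frob_nonneg _
    linarith
end

section
/- Let {P^(n)}_{n≥0} be a sequence of row-stochastic N×N matrices (entrywise nonnegative with every row summing to 1), and for each n set P̃^(n) := BP^(n)Bᵀ (the unique matrix satisfying BP^(n) = P̃^(n)B). Then the sequence {P^(n)}_{n≥0} is ergodic (i.e., lim_{t→∞} J·P^(t)P^(t−1)⋯P^(0) = 0 with J := I_N − (1/N)11ᵀ) if and only if lim_{t→∞} P̃^(t)P̃^(t−1)⋯P̃^(0) = 0. -/
open Matrix Filter

/-- a sequence of row-stochastic matrices is ergodic iff the products of
the projected matrices P̃^(n) := BP^(n)Bᵀ converge to zero. -/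
theorem stmt_18 (N : ℕ) (hN : 2 ≤ N)
    (B : Matrix (Fin (N - 1)) (Fin N) ℝ)
    (hB1 : B * Bᵀ = 1) (hB2 : B *ᵥ (fun _ => (1 : ℝ)) = 0)
    (P : ℕ → Matrix (Fin N) (Fin N) ℝ) (hP : ∀ n, rowStochastic (P n)) :
    Tendsto (fun t => projJ N * bprod P t) atTop (nhds 0) ↔
      Tendsto (fun t => bprod (fun n => B * P n * Bᵀ) t) atTop (nhds 0) := by
  have hN0 : (0:ℝ) < (N:ℝ) := by exact_mod_cast (by omega : 0 < N)
  set E : Matrix (Fin N) (Fin N) ℝ := Matrix.of fun _ _ => (1:ℝ) with hE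
  have hB2' : ∀ i, ∑ k, B i k = 0 := by
    intro i
    have := congrFun hB2 i
    simpa [Matrix.mulVec, dotProduct] using this
  have hBE : B * E = 0 := by
    ext i j
    simp [Matrix.mul_apply, hE, hB2' i]
  have hEBt : E * Bᵀ = 0 := by
    ext i j
    simp [Matrix.mul_apply, hE, Matrix.transpose_apply, hB2' j]
  -- key identity: projJ N = Bᵀ * B
  set s : ℝ := (Real.sqrt N)⁻¹ with hs
  have hs2 : s * s = (N:ℝ)⁻¹ := by
    rw [hs, ← mul_inv]
    rw [Real.mul_self_sqrt hN0.le]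
  set u : Matrix (Fin 1) (Fin N) ℝ := Matrix.of fun _ _ => s with hu
  have hBu : B * uᵀ = 0 := by
    ext i j
    simp [Matrix.mul_apply, hu, Matrix.transpose_apply, ← Finset.sum_mul, hB2' i]
  have huB : u * Bᵀ = 0 := by
    ext i j
    simp [Matrix.mul_apply, hu, Matrix.transpose_apply, ← Finset.mul_sum, hB2' j]
  have huu : u * uᵀ = 1 := by
    ext i j
    have : ∑ _k : Fin N, s * s = (N:ℝ) * (N:ℝ)⁻¹ := by
      rw [Finset.sum_const, hs2]
      simp [mul_comm]
    simp [Matrix.mul_apply, hu, Matrix.transpose_apply, Matrix.one_apply,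
      Fin.fin_one_eq_zero i, Fin.fin_one_eq_zero j, this, mul_inv_cancel₀ hN0.ne']
  set C := Matrix.fromRows B u with hC
  have hCCt : C * Cᵀ = 1 := by
    rw [hC, Matrix.transpose_fromRows, Matrix.fromRows_mul_fromCols,
      hB1, hBu, huB, huu, Matrix.fromBlocks_one]
  have e : (Fin (N-1) ⊕ Fin 1) ≃ Fin N :=
    finSumFinEquiv.trans (finCongr (by omega))
  have hCtC : Cᵀ * C = 1 := (Matrix.mul_eq_one_comm_of_equiv e).mp hCCt
  have hJ : projJ N = Bᵀ * B := by
    ext i j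
    have h1 : (Cᵀ * C) i j = (Bᵀ * B) i j + (N:ℝ)⁻¹ := by
      rw [Matrix.mul_apply, Matrix.mul_apply]
      rw [Fintype.sum_sum_type]
      simp [hC, hu, Matrix.transpose_apply, hs2]
    rw [hCtC] at h1
    have : (Bᵀ * B) i j = (1 : Matrix (Fin N) (Fin N) ℝ) i j - (N:ℝ)⁻¹ := by
      linarith [h1]
    rw [projJ, Matrix.sub_apply, Matrix.smul_apply, this]
    simp [hE]
  have hBtB : Bᵀ * B = 1 - (N:ℝ)⁻¹ • E := by rw [← hJ]; rfl
  -- stochasticity facts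
  have hPE : ∀ n, P n * E = E := by
    intro n
    ext i j
    simp [Matrix.mul_apply, hE, (hP n).2 i]
  have hbE : ∀ t, bprod P t * E = E := by
    intro t
    induction t with
    | zero => exact hPE 0
    | succ t ih => rw [bprod, Matrix.mul_assoc, ih, hPE]
  -- the product identity
  have hBP : ∀ n (M : Matrix (Fin N) (Fin (N-1)) ℝ),
      B * P n * (Bᵀ * B) * M = B * P n * M := by
    intro n M
    have h0 : B * P n * (Bᵀ * B) = B * P n := by
      rw [hBtB, Matrix.mul_sub, Matrix.mul_one, Matrix.mul_smul,
        Matrix.mul_assoc B (P n) E, hPE, hBE]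
      simp
    rw [h0]
  have hprod : ∀ t, bprod (fun n => B * P n * Bᵀ) t = B * bprod P t * Bᵀ := by
    intro t
    induction t with
    | zero => rfl
    | succ t ih =>
      show (B * P (t+1) * Bᵀ) * bprod (fun n => B * P n * Bᵀ) t = B * bprod P (t+1) * Bᵀ
      rw [ih]
      have : (B * P (t+1) * Bᵀ) * (B * bprod P t * Bᵀ)
          = B * P (t+1) * (Bᵀ * B) * (bprod P t * Bᵀ) := by
        simp only [Matrix.mul_assoc]
      rw [this, hBP]
      simp only [bprod, Matrix.mul_assoc]
  -- (a) B * bprod * Bᵀ = B * (projJ * bprod) * Bᵀ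
  have hBJ : B * projJ N = B := by
    rw [projJ]
    show B * (1 - (N:ℝ)⁻¹ • E) = B
    rw [Matrix.mul_sub, Matrix.mul_one, Matrix.mul_smul, hBE]
    simp
  have claim_a : ∀ t, bprod (fun n => B * P n * Bᵀ) t
      = B * (projJ N * bprod P t) * Bᵀ := by
    intro t
    rw [hprod, ← Matrix.mul_assoc, hBJ]
  -- (b) projJ * bprod = Bᵀ * (B * bprod * Bᵀ) * B
  have hEE : E * E = (N:ℝ) • E := by
    ext i j
    simp [Matrix.mul_apply, hE]
  have hJE : projJ N * E = 0 := by
    show (1 - (N:ℝ)⁻¹ • E) * E = 0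
    rw [Matrix.sub_mul, Matrix.one_mul, Matrix.smul_mul, hEE, smul_smul,
      inv_mul_cancel₀ hN0.ne']
    simp
  have claim_b : ∀ t, projJ N * bprod P t
      = Bᵀ * (bprod (fun n => B * P n * Bᵀ) t) * B := by
    intro t
    rw [hprod]
    have h1 : Bᵀ * (B * bprod P t * Bᵀ) * B
        = (Bᵀ * B) * bprod P t * (Bᵀ * B) := by
      simp only [Matrix.mul_assoc]
    rw [h1, ← hJ]
    have h2 : bprod P t * projJ N = bprod P t - (N:ℝ)⁻¹ • E := by
      show bprod P t * (1 - (N:ℝ)⁻¹ • E) = _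
      rw [Matrix.mul_sub, Matrix.mul_one, Matrix.mul_smul, hbE]
    rw [Matrix.mul_assoc, h2, Matrix.mul_sub, Matrix.mul_smul, hJE]
    simp
  constructor
  · intro h
    have hc : Continuous (fun X : Matrix (Fin N) (Fin N) ℝ => B * X * Bᵀ) :=
      (continuous_const.matrix_mul continuous_id).matrix_mul continuous_const
    have h2 := (hc.tendsto 0).comp h
    simp only [Function.comp_def, Matrix.mul_zero, Matrix.zero_mul] at h2
    exact h2.congr fun t => (claim_a t).symm
  · intro h
    have hc : Continuous (fun X : Matrix (Fin (N-1)) (Fin (N-1)) ℝ => Bᵀ * X * B) :=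
      (continuous_const.matrix_mul continuous_id).matrix_mul continuous_const
    have h2 := (hc.tendsto 0).comp h
    simp only [Function.comp_def, Matrix.mul_zero, Matrix.zero_mul] at h2
    exact h2.congr fun t => (claim_b t).symm
end
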